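/- arXiv:2404.15986 — 3 statements merged into one kernel-verified Lean document; each statement's English description precedes it below -/
import Mathlib

section
/- For any mutant-biased fitness graph 𝒢=(G,(m,r)), the fixation probability is a submodular set function: for all seed sets S, T ⊆ V, fp_𝒢(S) + fp_𝒢(T) ≥ fp_𝒢(S∪T) + fp_𝒢(S∩T). -/
open Finset
open scoped Classical

/-- A fitness graph: a finite strongly connected weighted directed graph together with
mutant and resident fitness functions. `w u v > 0` encodes that `(u,v)` is an edge
of non-zero weight; `w u ·` is a probability distribution. -/
structure FitnessGraph (V : Type) [Fintype V] [DecidableEq V] where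
  w : V → V → ℝ
  m : V → ℝ
  r : V → ℝ
  w_nonneg : ∀ u v, 0 ≤ w u v
  w_rowsum : ∀ u, ∑ v, w u v = 1
  strongly_connected : ∀ u v : V, Relation.ReflTransGen (fun a b => 0 < w a b) u v
  m_pos : ∀ u, 0 < m u
  r_pos : ∀ u, 0 < r u

variable {V : Type} [Fintype V] [DecidableEq V]

/-- A fitness graph is mutant-biased if `m(u) ≥ r(u)` for every node `u`. -/
def FitnessGraph.MutantBiased (G : FitnessGraph V) : Prop :=
  ∀ u, G.r u ≤ G.m u

/-- The (out-)degree of a node: the number of neighbors along edges of non-zero weight. -/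
noncomputable def FitnessGraph.deg (G : FitnessGraph V) (u : V) : ℕ :=
  (Finset.univ.filter fun v => 0 < G.w u v).card

/-- A fitness graph is undirected if its edge relation is symmetric and the weights
are uniform: `w(u,v) = 1/d(u)` for every edge `(u,v)`. -/
def FitnessGraph.Undirected (G : FitnessGraph V) : Prop :=
  (∀ u v, 0 < G.w u v → 0 < G.w v u) ∧
  ∀ u v, 0 < G.w u v → G.w u v = 1 / (G.deg u : ℝ)

/-- The fitness of node `u` in configuration `X`: `m(u)` if `u` is a mutant, `r(u)` otherwise. -/
def FitnessGraph.fit (G : FitnessGraph V) (X : Finset V) (u : V) : ℝ :=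
  if u ∈ X then G.m u else G.r u

/-- Total population fitness in configuration `X`. -/
def FitnessGraph.totalFit (G : FitnessGraph V) (X : Finset V) : ℝ :=
  ∑ u, G.fit X u

/-- The configuration resulting from `X` when `u` reproduces and replaces `v`. -/
def moranNext (X : Finset V) (u v : V) : Finset V :=
  if u ∈ X then insert v X else X.erase v

/-- One-step transition probability of the Heterogeneous Moran process. -/
noncomputable def FitnessGraph.step (G : FitnessGraph V) (X Y : Finset V) : ℝ :=
  ∑ u, ∑ v, (G.fit X u / G.totalFit X) * G.w u v * (if moranNext X u v = Y then 1 else 0)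

/-- `t`-step transition probability of the Heterogeneous Moran process. -/
noncomputable def FitnessGraph.stepN (G : FitnessGraph V) : ℕ → Finset V → Finset V → ℝ
  | 0, X, Y => if X = Y then 1 else 0
  | t + 1, X, Y => ∑ Z, FitnessGraph.stepN G t X Z * G.step Z Y

/-- Fixation probability: the probability that, started from seed set `S`, the process
eventually reaches the all-mutant configuration `V`; since `V` is absorbing this equals
`⨆ t, P(X_t = V)`. -/
noncomputable def FitnessGraph.fp (G : FitnessGraph V) (S : Finset V) : ℝ :=
  ⨆ t : ℕ, G.stepN t S Finset.univ


open Finset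
open scoped Classical

section Kernel
variable {α : Type*} [Fintype α] [DecidableEq α]

noncomputable def powK (K : α → α → ℝ) : ℕ → α → α → ℝ
  | 0, X, Y => if X = Y then 1 else 0
  | t + 1, X, Y => ∑ Z, powK K t X Z * K Z Y

variable {K : α → α → ℝ}

theorem powK_nonneg (hK0 : ∀ X Y, 0 ≤ K X Y) : ∀ t X Y, 0 ≤ powK K t X Y := by
  intro t
  induction t with
  | zero => intro X Y; simp only [powK]; split <;> norm_num
  | succ t ih =>
    intro X Y
    simp only [powK]
    exact Finset.sum_nonneg fun Z _ => mul_nonneg (ih X Z) (hK0 Z Y)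

theorem powK_rowsum (hK1 : ∀ X, ∑ Y, K X Y = 1) : ∀ t X, ∑ Y, powK K t X Y = 1 := by
  intro t
  induction t with
  | zero => intro X; simp [powK]
  | succ t ih =>
    intro X
    simp only [powK]
    rw [Finset.sum_comm]
    simp only [← Finset.mul_sum, hK1, mul_one]
    exact ih X

theorem powK_le_one (hK0 : ∀ X Y, 0 ≤ K X Y) (hK1 : ∀ X, ∑ Y, K X Y = 1) :
    ∀ t X Y, powK K t X Y ≤ 1 := by
  intro t X Y
  calc powK K t X Y ≤ ∑ Y', powK K t X Y' :=
        Finset.single_le_sum (fun Z _ => powK_nonneg hK0 t X Z) (Finset.mem_univ Y)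
    _ = 1 := powK_rowsum hK1 t X

theorem powK_succ_left (t : ℕ) (X Y : α) :
    powK K (t + 1) X Y = ∑ Z, K X Z * powK K t Z Y := by
  induction t generalizing Y with
  | zero =>
    show (∑ Z, powK K 0 X Z * K Z Y) = _
    simp [powK, Finset.sum_ite_eq, eq_comm]
  | succ t ih =>
    show (∑ Z, powK K (t + 1) X Z * K Z Y) = _
    calc (∑ Z, powK K (t + 1) X Z * K Z Y)
        = ∑ Z, (∑ W, K X W * powK K t W Z) * K Z Y := by
          refine Finset.sum_congr rfl fun Z _ => ?_; rw [ih]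
      _ = ∑ W, K X W * ∑ Z, powK K t W Z * K Z Y := by
          simp only [Finset.sum_mul, Finset.mul_sum, mul_assoc]
          rw [Finset.sum_comm]
      _ = _ := rfl

theorem powK_add (s t : ℕ) (X Y : α) :
    powK K (s + t) X Y = ∑ Z, powK K s X Z * powK K t Z Y := by
  induction t generalizing Y with
  | zero => simp [powK, Finset.sum_ite_eq', mul_ite]
  | succ t ih =>
    show powK K ((s + t) + 1) X Y = _
    calc powK K (s + t + 1) X Y = ∑ W, powK K (s + t) X W * K W Y := rfl
      _ = ∑ W, (∑ Z, powK K s X Z * powK K t Z W) * K W Y := by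
          refine Finset.sum_congr rfl fun W _ => ?_; rw [ih]
      _ = ∑ Z, powK K s X Z * ∑ W, powK K t Z W * K W Y := by
          simp only [Finset.sum_mul, Finset.mul_sum, mul_assoc]
          rw [Finset.sum_comm]
      _ = _ := rfl

/-- monotonicity of hitting an absorbing state -/
theorem powK_mono_absorbing (hK0 : ∀ X Y, 0 ≤ K X Y) {a : α} (ha : K a a = 1)
    (X : α) : Monotone fun t => powK K t X a := by
  have h1 : ∀ t, powK K t X a ≤ powK K (t + 1) X a := by
    intro t
    have : powK K t X a * K a a ≤ ∑ Z, powK K t X Z * K Z a :=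
      Finset.single_le_sum (f := fun Z => powK K t X Z * K Z a)
        (fun Z _ => mul_nonneg (powK_nonneg hK0 t X Z) (hK0 Z a)) (Finset.mem_univ a)
    show powK K t X a ≤ ∑ Z, powK K t X Z * K Z a
    simpa [ha] using this
  exact monotone_nat_of_le_succ h1

theorem powK_self_absorbing (hK0 : ∀ X Y, 0 ≤ K X Y) (hK1 : ∀ X, ∑ Y, K X Y = 1)
    {a : α} (ha : K a a = 1) (t : ℕ) : powK K t a a = 1 := by
  refine le_antisymm (powK_le_one hK0 hK1 t a a) ?_
  have h := powK_mono_absorbing hK0 ha a (Nat.zero_le t)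
  simpa [powK] using h

end Kernel
section AbsProb
open Filter Topology
variable {α : Type*} [Fintype α] [DecidableEq α]
variable {K : α → α → ℝ}

noncomputable def absP (K : α → α → ℝ) (a : α) (X : α) : ℝ := ⨆ t : ℕ, powK K t X a

theorem absP_bddAbove (hK0 : ∀ X Y, 0 ≤ K X Y) (hK1 : ∀ X, ∑ Y, K X Y = 1) (a X : α) :
    BddAbove (Set.range fun t => powK K t X a) :=
  ⟨1, by rintro y ⟨t, rfl⟩; exact powK_le_one hK0 hK1 t X a⟩

theorem le_absP (hK0 : ∀ X Y, 0 ≤ K X Y) (hK1 : ∀ X, ∑ Y, K X Y = 1) (a X : α) (t : ℕ) :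
    powK K t X a ≤ absP K a X :=
  le_ciSup (absP_bddAbove hK0 hK1 a X) t

theorem absP_nonneg (hK0 : ∀ X Y, 0 ≤ K X Y) (hK1 : ∀ X, ∑ Y, K X Y = 1) (a X : α) :
    0 ≤ absP K a X :=
  le_trans (powK_nonneg hK0 0 X a) (le_absP hK0 hK1 a X 0)

theorem absP_self (hK0 : ∀ X Y, 0 ≤ K X Y) (hK1 : ∀ X, ∑ Y, K X Y = 1) (a : α) :
    1 ≤ absP K a a := by
  have := le_absP hK0 hK1 a a 0
  simpa [powK] using this

theorem absP_tendsto (hK0 : ∀ X Y, 0 ≤ K X Y) (hK1 : ∀ X, ∑ Y, K X Y = 1)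
    {a : α} (ha : K a a = 1) (X : α) :
    Tendsto (fun t => powK K t X a) atTop (𝓝 (absP K a X)) :=
  tendsto_atTop_ciSup (powK_mono_absorbing hK0 ha X) (absP_bddAbove hK0 hK1 a X)

/-- harmonicity of the absorption probability -/
theorem absP_harmonic (hK0 : ∀ X Y, 0 ≤ K X Y) (hK1 : ∀ X, ∑ Y, K X Y = 1)
    {a : α} (ha : K a a = 1) (X : α) :
    ∑ Z, K X Z * absP K a Z = absP K a X := by
  have h1 : Tendsto (fun t => ∑ Z, K X Z * powK K t Z a) atTop
      (𝓝 (∑ Z, K X Z * absP K a Z)) := by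
    refine tendsto_finset_sum _ fun Z _ => ?_
    exact (absP_tendsto hK0 hK1 ha Z).const_mul _
  have h2 : Tendsto (fun t => ∑ Z, K X Z * powK K t Z a) atTop (𝓝 (absP K a X)) := by
    have heq : (fun t => ∑ Z, K X Z * powK K t Z a) = fun t => powK K (t + 1) X a := by
      funext t; rw [powK_succ_left]
    rw [heq]
    exact (absP_tendsto hK0 hK1 ha X).comp (tendsto_add_atTop_nat 1)
  exact tendsto_nhds_unique h1 h2

/-- minimality of the absorption probability among superharmonic functions -/
theorem absP_minimal (hK0 : ∀ X Y, 0 ≤ K X Y) (hK1 : ∀ X, ∑ Y, K X Y = 1)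
    {a : α} {h : α → ℝ} (hnn : ∀ X, 0 ≤ h X) (hha : 1 ≤ h a)
    (hsup : ∀ X, ∑ Z, K X Z * h Z ≤ h X) (X : α) : absP K a X ≤ h X := by
  refine ciSup_le fun t => ?_
  induction t generalizing X with
  | zero =>
    simp only [powK]
    split
    · next heq => subst heq; exact hha
    · exact hnn X
  | succ t ih =>
    rw [powK_succ_left]
    refine le_trans (Finset.sum_le_sum fun Z _ => ?_) (hsup X)
    exact mul_le_mul_of_nonneg_left (ih Z) (hK0 X Z)

end AbsProb

section Graph
variable {V : Type} [Fintype V] [DecidableEq V]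

/-- update map used by the coupled process -/
def upd (u v : V) (b : Bool) (X : Finset V) : Finset V :=
  if u ∈ X then insert v X else if b then X.erase v else X

abbrev EType (V : Type) := V × V × Bool

def updE (e : EType V) (X : Finset V) : Finset V := upd e.1 e.2.1 e.2.2 X

variable (G : FitnessGraph V)

/-- probability weight of an elementary event -/
noncomputable def coefE (e : EType V) : ℝ :=
  (if e.2.2 then G.r e.1 else G.m e.1 - G.r e.1) / (∑ x, G.m x) * G.w e.1 e.2.1

/-- the lazy one-step kernel -/
noncomputable def lstep (X Y : Finset V) : ℝ :=
  ∑ e : EType V, coefE G e * (if updE e X = Y then 1 else 0)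

variable [Nonempty V]

theorem M_pos : 0 < ∑ x, G.m x :=
  Finset.sum_pos (fun x _ => G.m_pos x) Finset.univ_nonempty

theorem fit_pos (X : Finset V) (u : V) : 0 < G.fit X u := by
  unfold FitnessGraph.fit; split
  · exact G.m_pos u
  · exact G.r_pos u

theorem totalFit_pos (X : Finset V) : 0 < G.totalFit X :=
  Finset.sum_pos (fun x _ => fit_pos G X x) Finset.univ_nonempty

theorem fit_le_m (hbias : G.MutantBiased) (X : Finset V) (u : V) : G.fit X u ≤ G.m u := by
  unfold FitnessGraph.fit; split
  · exact le_refl _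
  · exact hbias u

theorem totalFit_le_M (hbias : G.MutantBiased) (X : Finset V) :
    G.totalFit X ≤ ∑ x, G.m x :=
  Finset.sum_le_sum fun x _ => fit_le_m G hbias X x

theorem coefE_nonneg (hbias : G.MutantBiased) (e : EType V) : 0 ≤ coefE G e := by
  unfold coefE
  refine mul_nonneg (div_nonneg ?_ (le_of_lt (M_pos G))) (G.w_nonneg _ _)
  split
  · exact le_of_lt (G.r_pos _)
  · exact sub_nonneg.mpr (hbias _)

theorem coefE_sum : ∑ e : EType V, coefE G e = 1 := by
  rw [Fintype.sum_prod_type]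
  have h1 : ∀ u : V, ∑ p : V × Bool, coefE G (u, p) = G.m u / (∑ x, G.m x) := by
    intro u
    rw [Fintype.sum_prod_type]
    have h2 : ∀ v : V, ∑ b : Bool, coefE G (u, v, b) = G.m u / (∑ x, G.m x) * G.w u v := by
      intro v
      simp only [coefE, Fintype.sum_bool]
      norm_num
      ring
    simp only [h2, ← Finset.mul_sum, G.w_rowsum, mul_one]
  simp only [h1, ← Finset.sum_div, div_self (ne_of_gt (M_pos G))]

theorem lstep_nonneg (hbias : G.MutantBiased) (X Y : Finset V) : 0 ≤ lstep G X Y := by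
  refine Finset.sum_nonneg fun e _ => mul_nonneg (coefE_nonneg G hbias e) ?_
  split <;> norm_num

theorem lstep_rowsum (X : Finset V) : ∑ Y, lstep G X Y = 1 := by
  unfold lstep
  rw [Finset.sum_comm]
  simp only [mul_ite, mul_one, mul_zero, Finset.sum_ite_eq, Finset.mem_univ, if_true]
  exact coefE_sum G

/-- the lazy kernel is a lazified version of the Moran kernel -/
theorem lstep_eq (X Y : Finset V) :
    lstep G X Y = (G.totalFit X / ∑ x, G.m x) * G.step X Y
      + (1 - G.totalFit X / ∑ x, G.m x) * (if Y = X then 1 else 0) := by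
  have hM := M_pos G
  have hF := totalFit_pos G X
  have key : ∀ u v : V, (∑ b : Bool, coefE G (u, v, b) * (if updE (u, v, b) X = Y then 1 else 0))
      = (G.totalFit X / ∑ x, G.m x) * ((G.fit X u / G.totalFit X) * G.w u v *
          (if moranNext X u v = Y then 1 else 0))
        + (G.m u - G.fit X u) / (∑ x, G.m x) * G.w u v * (if Y = X then 1 else 0) := by
    intro u v
    have hM' := ne_of_gt hM
    have hF' := ne_of_gt hF
    simp only [Fintype.sum_bool, coefE, updE, upd, moranNext, FitnessGraph.fit]
    norm_num
    by_cases hu : u ∈ X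
    · simp only [hu, if_true]
      split_ifs <;> field_simp <;> ring
    · simp only [hu, if_false]
      simp only [show (X = Y) ↔ (Y = X) from eq_comm]
      split_ifs <;> (field_simp; try ring)
  unfold lstep FitnessGraph.step
  simp only [Fintype.sum_prod_type]
  simp only [key]
  simp only [Finset.sum_add_distrib]
  congr 1
  · simp only [← Finset.mul_sum]
  · have h3 : ∀ u : V, ∑ v, (G.m u - G.fit X u) / (∑ x, G.m x) * G.w u v *
        (if Y = X then 1 else 0)
        = (G.m u - G.fit X u) / (∑ x, G.m x) * (if Y = X then 1 else 0) := by
      intro u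
      simp only [mul_comm _ ((if Y = X then (1:ℝ) else 0)), ← mul_assoc]
      rw [← Finset.mul_sum, G.w_rowsum, mul_one, mul_comm]
    simp only [h3]
    rw [← Finset.sum_mul]
    congr 1
    rw [← Finset.sum_div, Finset.sum_sub_distrib]
    rw [sub_div, div_self (ne_of_gt hM)]
    rfl

end Graph

section Graph2
variable {V : Type} [Fintype V] [DecidableEq V] (G : FitnessGraph V) [Nonempty V]

theorem step_nonneg (X Y : Finset V) : 0 ≤ G.step X Y := by
  refine Finset.sum_nonneg fun u _ => Finset.sum_nonneg fun v _ => ?_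
  refine mul_nonneg (mul_nonneg (div_nonneg (le_of_lt (fit_pos G X u))
    (le_of_lt (totalFit_pos G X))) (G.w_nonneg u v)) ?_
  split <;> norm_num

theorem step_rowsum (X : Finset V) : ∑ Y, G.step X Y = 1 := by
  unfold FitnessGraph.step
  rw [Finset.sum_comm]
  have h1 : ∀ u : V, ∑ Y : Finset V, ∑ v, (G.fit X u / G.totalFit X) * G.w u v *
      (if moranNext X u v = Y then 1 else 0) = G.fit X u / G.totalFit X := by
    intro u
    rw [Finset.sum_comm]
    simp only [mul_ite, mul_one, mul_zero, Finset.sum_ite_eq, Finset.mem_univ, if_true]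
    rw [← Finset.mul_sum, G.w_rowsum, mul_one]
  simp only [h1]
  rw [← Finset.sum_div]
  exact div_self (ne_of_gt (totalFit_pos G X))

theorem step_univ_univ : G.step Finset.univ Finset.univ = 1 := by
  unfold FitnessGraph.step
  have h1 : ∀ u v : V, moranNext (Finset.univ : Finset V) u v = Finset.univ := by
    intro u v; simp [moranNext]
  simp only [h1, if_true]
  have h2 : ∀ u : V, ∑ v, (G.fit Finset.univ u / G.totalFit Finset.univ) * G.w u v * 1
      = G.fit Finset.univ u / G.totalFit Finset.univ := by
    intro u
    simp only [mul_one, ← Finset.mul_sum, G.w_rowsum]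
  simp only [h2]
  rw [← Finset.sum_div]
  exact div_self (ne_of_gt (totalFit_pos G _))

theorem totalFit_univ : G.totalFit Finset.univ = ∑ x, G.m x := by
  unfold FitnessGraph.totalFit FitnessGraph.fit
  simp

theorem lstep_univ_univ : lstep G Finset.univ Finset.univ = 1 := by
  rw [lstep_eq, totalFit_univ, div_self (ne_of_gt (M_pos G)), step_univ_univ]
  simp

theorem lstep_empty_empty : lstep G ∅ ∅ = 1 := by
  have h1 : ∀ e : EType V, updE e (∅ : Finset V) = ∅ := by
    intro e
    unfold updE upd
    simp only [Finset.notMem_empty, if_false, Finset.erase_empty]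
    split <;> rfl
  unfold lstep
  simp only [h1, if_true]
  simp only [mul_one]
  exact coefE_sum G

theorem stepN_eq_powK : ∀ (t : ℕ) (X Y : Finset V), G.stepN t X Y = powK G.step t X Y := by
  intro t
  induction t with
  | zero => intro X Y; rfl
  | succ t ih =>
    intro X Y
    show (∑ Z, G.stepN t X Z * G.step Z Y) = ∑ Z, powK G.step t X Z * G.step Z Y
    exact Finset.sum_congr rfl fun Z _ => by rw [ih]

theorem fp_eq_absP (S : Finset V) : G.fp S = absP G.step Finset.univ S := by
  unfold FitnessGraph.fp absP
  simp only [stepN_eq_powK]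

/-- The fixation probabilities of the Moran chain and of its lazy version agree. -/
theorem fp_eq_fpl (hbias : G.MutantBiased) (S : Finset V) :
    G.fp S = absP (lstep G) Finset.univ S := by
  have hM := M_pos G
  have hs0 : ∀ X Y, 0 ≤ G.step X Y := step_nonneg G
  have hs1 : ∀ X : Finset V, ∑ Y, G.step X Y = 1 := step_rowsum G
  have hl0 : ∀ X Y, 0 ≤ lstep G X Y := lstep_nonneg G hbias
  have hl1 : ∀ X : Finset V, ∑ Y, lstep G X Y = 1 := lstep_rowsum G
  have hc : ∀ X : Finset V, 0 < G.totalFit X / ∑ x, G.m x :=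
    fun X => div_pos (totalFit_pos G X) hM
  -- transfer of one-step averaging
  have htrans : ∀ (f : Finset V → ℝ) (X : Finset V),
      ∑ Z, lstep G X Z * f Z = (G.totalFit X / ∑ x, G.m x) * (∑ Z, G.step X Z * f Z)
        + (1 - G.totalFit X / ∑ x, G.m x) * f X := by
    intro f X
    have : ∀ Z, lstep G X Z * f Z = (G.totalFit X / ∑ x, G.m x) * (G.step X Z * f Z)
        + (1 - G.totalFit X / ∑ x, G.m x) * ((if Z = X then 1 else 0) * f Z) := by
      intro Z; rw [lstep_eq]; ring
    simp only [this, Finset.sum_add_distrib, ← Finset.mul_sum]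
    congr 1
    simp [Finset.sum_ite_eq]
  rw [fp_eq_absP]
  -- both are harmonic for both kernels
  have harmL : ∀ X, ∑ Z, G.step X Z * absP (lstep G) Finset.univ Z
      = absP (lstep G) Finset.univ X := by
    intro X
    have h := absP_harmonic hl0 hl1 (lstep_univ_univ G) X
    rw [htrans] at h
    have h2 : (G.totalFit X / ∑ x, G.m x) * (∑ Z, G.step X Z * absP (lstep G) Finset.univ Z)
        = (G.totalFit X / ∑ x, G.m x) * absP (lstep G) Finset.univ X := by
      linarith [h]
    exact mul_left_cancel₀ (ne_of_gt (hc X)) h2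
  have harmS : ∀ X, ∑ Z, lstep G X Z * absP G.step Finset.univ Z
      = absP G.step Finset.univ X := by
    intro X
    rw [htrans, absP_harmonic hs0 hs1 (step_univ_univ G) X]
    ring
  apply le_antisymm
  · exact absP_minimal hs0 hs1 (fun X => absP_nonneg hl0 hl1 _ X)
      (absP_self hl0 hl1 _) (fun X => le_of_eq (harmL X)) S
  · exact absP_minimal hl0 hl1 (fun X => absP_nonneg hs0 hs1 _ X)
      (absP_self hs0 hs1 _) (fun X => le_of_eq (harmS X)) S

end Graph2

section Quad
variable {V : Type} [Fintype V] [DecidableEq V]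

abbrev QType (V : Type) := Finset V × Finset V × Finset V × Finset V

def updQ (e : EType V) (q : QType V) : QType V :=
  (updE e q.1, updE e q.2.1, updE e q.2.2.1, updE e q.2.2.2)

variable (G : FitnessGraph V)

/-- the coupled four-chain kernel -/
noncomputable def qstep (q q' : QType V) : ℝ :=
  ∑ e : EType V, coefE G e * (if updQ e q = q' then 1 else 0)

/-- sum against an indicator kernel -/
theorem sum_ind_mul {β : Type*} [Fintype β] [DecidableEq β] {ι : Type*} [Fintype ι]
    (c : ι → ℝ) (h : ι → β) (f : β → ℝ) :
    ∑ x : β, (∑ e : ι, c e * (if h e = x then 1 else 0)) * f x = ∑ e : ι, c e * f (h e) := by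
  simp only [Finset.sum_mul]
  rw [Finset.sum_comm]
  simp only [mul_ite, ite_mul, mul_one, mul_zero, zero_mul, one_mul]
  simp only [Finset.sum_ite_eq, Finset.mem_univ, if_true]

variable [Nonempty V]

theorem qstep_nonneg (hbias : G.MutantBiased) (q q' : QType V) : 0 ≤ qstep G q q' := by
  refine Finset.sum_nonneg fun e _ => mul_nonneg (coefE_nonneg G hbias e) ?_
  split <;> norm_num

theorem qstep_rowsum (q : QType V) : ∑ q', qstep G q q' = 1 := by
  unfold qstep
  rw [Finset.sum_comm]
  simp only [mul_ite, mul_one, mul_zero, Finset.sum_ite_eq, Finset.mem_univ, if_true]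
  exact coefE_sum G

theorem qstep_marginal (π : QType V → Finset V)
    (hπ : ∀ (e : EType V) (q : QType V), π (updQ e q) = updE e (π q))
    (f : Finset V → ℝ) (q : QType V) :
    ∑ q', qstep G q q' * f (π q') = ∑ Y, lstep G (π q) Y * f Y := by
  unfold qstep lstep
  rw [sum_ind_mul (coefE G) (fun e => updQ e q) (fun x => f (π x)),
    sum_ind_mul (coefE G) (fun e => updE e (π q)) f]
  simp only [hπ]

theorem qpow_marginal (π : QType V → Finset V)
    (hπ : ∀ (e : EType V) (q : QType V), π (updQ e q) = updE e (π q)) :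
    ∀ (t : ℕ) (f : Finset V → ℝ) (q : QType V),
      ∑ q', powK (qstep G) t q q' * f (π q') = ∑ Y, powK (lstep G) t (π q) Y * f Y := by
  intro t
  induction t with
  | zero =>
    intro f q
    simp only [powK, ite_mul, one_mul, zero_mul, Finset.sum_ite_eq, Finset.mem_univ, if_true]
  | succ t ih =>
    intro f q
    show (∑ q', (∑ z, powK (qstep G) t q z * qstep G z q') * f (π q'))
      = ∑ Y, powK (lstep G) (t + 1) (π q) Y * f Y
    have h1 : (∑ q', (∑ z, powK (qstep G) t q z * qstep G z q') * f (π q'))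
        = ∑ z, powK (qstep G) t q z * ∑ q', qstep G z q' * f (π q') := by
      simp only [Finset.sum_mul]
      rw [Finset.sum_comm]
      simp only [Finset.mul_sum, mul_assoc]
    rw [h1]
    have h2 : ∀ z : QType V, (∑ q', qstep G z q' * f (π q'))
        = (fun W => ∑ Y, lstep G W Y * f Y) (π z) :=
      fun z => qstep_marginal G π hπ f z
    simp only [h2]
    rw [ih (fun W => ∑ Y, lstep G W Y * f Y) q]
    show (∑ W, powK (lstep G) t (π q) W * ∑ Y, lstep G W Y * f Y) = _
    have h3 : (∑ W, powK (lstep G) t (π q) W * ∑ Y, lstep G W Y * f Y)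
        = ∑ Y, (∑ W, powK (lstep G) t (π q) W * lstep G W Y) * f Y := by
      simp only [Finset.mul_sum, Finset.sum_mul]
      rw [Finset.sum_comm]
      simp only [mul_assoc]
    rw [h3]
    rfl

def GoodQ (q : QType V) : Prop :=
  q.2.2.1 ⊆ q.1 ∧ q.2.2.1 ⊆ q.2.1 ∧ q.1 ∪ q.2.1 = q.2.2.2

theorem upd_mono {u v : V} {b : Bool} {C A : Finset V} (h : C ⊆ A) :
    upd u v b C ⊆ upd u v b A := by
  unfold upd
  by_cases hC : u ∈ C
  · have hA : u ∈ A := h hC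
    simp only [hC, hA, if_true]
    exact Finset.insert_subset_insert _ h
  · by_cases hA : u ∈ A
    · simp only [hC, hA, if_true, if_false]
      refine le_trans ?_ (Finset.subset_insert v A)
      split
      · exact le_trans (Finset.erase_subset _ _) h
      · exact h
    · simp only [hC, hA, if_false]
      split
      · exact Finset.erase_subset_erase _ h
      · exact h

theorem upd_union (u v : V) (b : Bool) (A B : Finset V) :
    upd u v b A ∪ upd u v b B = upd u v b (A ∪ B) := by
  unfold upd
  by_cases hA : u ∈ A <;> by_cases hB : u ∈ B <;> cases b <;>
    simp only [hA, hB, Finset.mem_union, true_or, or_true, false_or, or_false,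
      if_true, if_false, Bool.false_eq_true] <;>
    ext x <;>
    simp only [Finset.mem_union, Finset.mem_insert, Finset.mem_erase] <;>
    by_cases hx : x = v <;> simp [hx] <;> tauto

theorem goodQ_updQ (e : EType V) {q : QType V} (h : GoodQ q) : GoodQ (updQ e q) := by
  obtain ⟨h1, h2, h3⟩ := h
  refine ⟨upd_mono h1, upd_mono h2, ?_⟩
  show upd e.1 e.2.1 e.2.2 q.1 ∪ upd e.1 e.2.1 e.2.2 q.2.1 = _
  rw [upd_union, h3]
  rfl

theorem qstep_support {q q' : QType V} (h : qstep G q q' ≠ 0) : ∃ e, q' = updQ e q := by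
  by_contra hc
  push_neg at hc
  apply h
  unfold qstep
  refine Finset.sum_eq_zero fun e _ => ?_
  rw [if_neg (fun he => hc e he.symm), mul_zero]

theorem qpow_good (hbias : G.MutantBiased) :
    ∀ (t : ℕ) {q q' : QType V}, GoodQ q → powK (qstep G) t q q' ≠ 0 → GoodQ q' := by
  intro t
  induction t with
  | zero =>
    intro q q' hq h
    simp only [powK] at h
    split at h
    · next he => exact he ▸ hq
    · exact absurd rfl h
  | succ t ih =>
    intro q q' hq h
    simp only [powK] at h
    obtain ⟨z, _, hz⟩ := Finset.exists_ne_zero_of_sum_ne_zero h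
    have hz1 : powK (qstep G) t q z ≠ 0 := fun h0 => hz (by rw [h0, zero_mul])
    have hz2 : qstep G z q' ≠ 0 := fun h0 => hz (by rw [h0, mul_zero])
    obtain ⟨e, he⟩ := qstep_support G hz2
    exact he ▸ goodQ_updQ e (ih hq hz1)

end Quad

section Absorb
variable {V : Type} [Fintype V] [DecidableEq V] (G : FitnessGraph V) [Nonempty V]

theorem crossing {X : Finset V} {u v : V}
    (h : Relation.ReflTransGen (fun a b => 0 < G.w a b) u v) (hu : u ∈ X) (hv : v ∉ X) :
    ∃ a ∈ X, ∃ b, b ∉ X ∧ 0 < G.w a b := by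
  induction h with
  | refl => exact absurd hu hv
  | @tail c d hpath hedge ih =>
    by_cases hc : c ∈ X
    · exact ⟨c, hc, d, hv, hedge⟩
    · exact ih hc

theorem boundary_edge {X : Finset V} (hne : X.Nonempty) (hXu : X ≠ Finset.univ) :
    ∃ a ∈ X, ∃ b, b ∉ X ∧ 0 < G.w a b := by
  obtain ⟨u, hu⟩ := hne
  have : ∃ v, v ∉ X := by
    by_contra hc
    push_neg at hc
    exact hXu (Finset.eq_univ_iff_forall.mpr hc)
  obtain ⟨v, hv⟩ := this
  exact crossing G (G.strongly_connected u v) hu hv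

theorem lstep_grow (hbias : G.MutantBiased) {X : Finset V} (hne : X.Nonempty)
    (hXu : X ≠ Finset.univ) :
    ∃ Y : Finset V, X ⊆ Y ∧ Y.card = X.card + 1 ∧ Y.Nonempty ∧ 0 < lstep G X Y := by
  obtain ⟨a, ha, b, hb, hw⟩ := boundary_edge G hne hXu
  refine ⟨insert b X, Finset.subset_insert _ _, Finset.card_insert_of_notMem hb,
    Finset.insert_nonempty _ _, ?_⟩
  have hterm : (0:ℝ) < coefE G (a, b, true) * (if updE (a, b, true) X = insert b X then 1 else 0) := by
    have hupd : updE (a, b, true) X = insert b X := by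
      unfold updE upd
      simp [ha]
    rw [hupd, if_pos rfl, mul_one]
    unfold coefE
    simp only [if_true]
    exact mul_pos (div_pos (G.r_pos a) (M_pos G)) hw
  calc (0:ℝ) < _ := hterm
    _ ≤ lstep G X (insert b X) := by
      refine Finset.single_le_sum (f := fun e => coefE G e *
        (if updE e X = insert b X then 1 else 0)) (fun e _ => ?_) (Finset.mem_univ (a, b, true))
      refine mul_nonneg (coefE_nonneg G hbias e) ?_
      split <;> norm_num

theorem reach_univ (hbias : G.MutantBiased) :
    ∀ (d : ℕ) (X : Finset V), X.Nonempty → Fintype.card V - X.card ≤ d →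
      0 < powK (lstep G) d X Finset.univ := by
  intro d
  induction d with
  | zero =>
    intro X hne hcard
    have hX : X = Finset.univ := by
      have h1 : Fintype.card V ≤ X.card := by omega
      have h2 : X.card ≤ Fintype.card V := by simpa using X.card_le_univ
      exact Finset.eq_univ_of_card X (le_antisymm h2 h1)
    subst hX
    simp [powK]
  | succ d ih =>
    intro X hne hcard
    by_cases hXu : X = Finset.univ
    · subst hXu
      have h1 : powK (lstep G) 0 (Finset.univ : Finset V) Finset.univ
          ≤ powK (lstep G) (d + 1) Finset.univ Finset.univ :=
        powK_mono_absorbing (lstep_nonneg G hbias) (lstep_univ_univ G)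
          Finset.univ (Nat.zero_le (d + 1))
      have h0 : powK (lstep G) 0 (Finset.univ : Finset V) Finset.univ = 1 := by simp [powK]
      linarith
    · obtain ⟨Y, hXY, hcardY, hYne, hpos⟩ := lstep_grow G hbias hne hXu
      have hrec : 0 < powK (lstep G) d Y Finset.univ := by
        refine ih Y hYne ?_
        omega
      have h2 : lstep G X Y * powK (lstep G) d Y Finset.univ
          ≤ powK (lstep G) (d + 1) X Finset.univ := by
        rw [powK_succ_left]
        refine Finset.single_le_sum (f := fun Z => lstep G X Z * powK (lstep G) d Z Finset.univ)
          (fun Z _ => mul_nonneg (lstep_nonneg G hbias X Z)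
            (powK_nonneg (lstep_nonneg G hbias) d Z Finset.univ)) (Finset.mem_univ Y)
      exact lt_of_lt_of_le (mul_pos hpos hrec) h2

/-- probability of being absorbed by time `t` -/
noncomputable def absorbed (t : ℕ) (X : Finset V) : ℝ :=
  powK (lstep G) t X ∅ + powK (lstep G) t X Finset.univ

theorem absorbed_mono (hbias : G.MutantBiased) (X : Finset V) :
    Monotone fun t => absorbed G t X := by
  intro s t hst
  exact add_le_add (powK_mono_absorbing (lstep_nonneg G hbias) (lstep_empty_empty G) X hst)
    (powK_mono_absorbing (lstep_nonneg G hbias) (lstep_univ_univ G) X hst)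

theorem absorbed_le_one (hbias : G.MutantBiased) (t : ℕ) (X : Finset V) :
    absorbed G t X ≤ 1 := by
  have hne : (∅ : Finset V) ≠ Finset.univ := Ne.symm Finset.univ_nonempty.ne_empty
  have h1 : ({∅, Finset.univ} : Finset (Finset V)) ⊆ Finset.univ := Finset.subset_univ _
  have h2 : ∑ Y ∈ ({∅, Finset.univ} : Finset (Finset V)), powK (lstep G) t X Y
      ≤ ∑ Y, powK (lstep G) t X Y :=
    Finset.sum_le_sum_of_subset_of_nonneg h1
      (fun Y _ _ => powK_nonneg (lstep_nonneg G hbias) t X Y)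
  rw [Finset.sum_pair hne, powK_rowsum (lstep_rowsum G)] at h2
  exact h2

theorem absorbed_nonneg (hbias : G.MutantBiased) (t : ℕ) (X : Finset V) :
    0 ≤ absorbed G t X :=
  add_nonneg (powK_nonneg (lstep_nonneg G hbias) t X ∅)
    (powK_nonneg (lstep_nonneg G hbias) t X Finset.univ)

theorem sum_g_eq (hbias : G.MutantBiased) (t : ℕ) (Z : Finset V) :
    ∑ W, powK (lstep G) t Z W * (if W = ∅ ∨ W = Finset.univ then (0:ℝ) else 1)
      = 1 - absorbed G t Z := by
  have hne : (∅ : Finset V) ≠ Finset.univ := Ne.symm Finset.univ_nonempty.ne_empty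
  have hpt : ∀ W : Finset V, powK (lstep G) t Z W *
      (if W = ∅ ∨ W = Finset.univ then (0:ℝ) else 1)
      = powK (lstep G) t Z W - (if W = ∅ then powK (lstep G) t Z W else 0)
        - (if W = Finset.univ then powK (lstep G) t Z W else 0) := by
    intro W
    by_cases h1 : W = ∅
    · subst h1; simp [hne]
    · by_cases h2 : W = Finset.univ <;> simp [h1, h2, hne.symm]
  simp only [hpt, Finset.sum_sub_distrib, powK_rowsum (lstep_rowsum G),
    Finset.sum_ite_eq', Finset.mem_univ, if_true]
  unfold absorbed
  ring

theorem absorbed_eventually (hbias : G.MutantBiased) (X : Finset V) {δ : ℝ} (hδ : 0 < δ) :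
    ∃ t, 1 - absorbed G t X < δ := by
  classical
  set n := Fintype.card V with hn
  -- a uniform lower bound on absorption within n steps
  obtain ⟨X₀, _, hX₀⟩ := Finset.exists_min_image (Finset.univ : Finset (Finset V))
    (fun Z => absorbed G n Z) ⟨∅, Finset.mem_univ ∅⟩
  set ε := absorbed G n X₀ with hε
  have hεpos : 0 < ε := by
    rcases Finset.eq_empty_or_nonempty X₀ with h | h
    · subst h
      have h1 : powK (lstep G) n (∅ : Finset V) ∅ = 1 :=
        powK_self_absorbing (lstep_nonneg G hbias) (lstep_rowsum G) (lstep_empty_empty G) n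
      have h2 := powK_nonneg (lstep_nonneg G hbias) n (∅ : Finset V) Finset.univ
      unfold ε
      unfold absorbed
      rw [h1]; linarith
    · have h1 := reach_univ G hbias n X₀ h (by omega)
      have h2 := powK_nonneg (lstep_nonneg G hbias) n X₀ ∅
      unfold ε
      unfold absorbed
      linarith
  have hεle : ε ≤ 1 := absorbed_le_one G hbias n X₀
  have hεbound : ∀ Z, ε ≤ absorbed G n Z := fun Z => hX₀ Z (Finset.mem_univ Z)
  -- contraction
  have hcontr : ∀ (t : ℕ) (Z : Finset V),
      1 - absorbed G (t + n) Z ≤ (1 - ε) * (1 - absorbed G t Z) := by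
    intro t Z
    have e1 : 1 - absorbed G (t + n) Z
        = ∑ W, powK (lstep G) t Z W * (1 - absorbed G n W) := by
      have ha : absorbed G (t + n) Z = ∑ W, powK (lstep G) t Z W * absorbed G n W := by
        unfold absorbed
        rw [powK_add, powK_add]
        simp only [mul_add, Finset.sum_add_distrib]
      simp only [mul_sub, mul_one, Finset.sum_sub_distrib,
        powK_rowsum (lstep_rowsum G), ← ha]
    have e2 := sum_g_eq G hbias t Z
    rw [e1, ← e2, Finset.mul_sum]
    refine Finset.sum_le_sum fun W _ => ?_
    have hp := powK_nonneg (lstep_nonneg G hbias) t Z W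
    by_cases h1 : W = ∅ ∨ W = Finset.univ
    · rw [if_pos h1]
      have habs : (1:ℝ) ≤ absorbed G n W := by
        rcases h1 with h | h <;> subst h
        · have := powK_self_absorbing (lstep_nonneg G hbias) (lstep_rowsum G)
            (lstep_empty_empty G) n
          unfold absorbed
          rw [this]
          have := powK_nonneg (lstep_nonneg G hbias) n (∅ : Finset V) Finset.univ
          linarith
        · have := powK_self_absorbing (lstep_nonneg G hbias) (lstep_rowsum G)
            (lstep_univ_univ G) n
          unfold absorbed
          rw [this]
          have := powK_nonneg (lstep_nonneg G hbias) n (Finset.univ : Finset V) ∅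
          linarith
      have : 1 - absorbed G n W ≤ 0 := by linarith
      have := mul_nonpos_of_nonneg_of_nonpos hp this
      simpa using this
    · rw [if_neg h1, mul_one]
      have : 1 - absorbed G n W ≤ 1 - ε := by
        have := hεbound W; linarith
      calc powK (lstep G) t Z W * (1 - absorbed G n W)
          ≤ powK (lstep G) t Z W * (1 - ε) := mul_le_mul_of_nonneg_left this hp
        _ = (1 - ε) * powK (lstep G) t Z W := mul_comm _ _
  -- iterate
  have hiter : ∀ k : ℕ, 1 - absorbed G (k * n) X ≤ (1 - ε) ^ k := by
    intro k
    induction k with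
    | zero =>
      simp only [Nat.zero_mul, pow_zero]
      have := absorbed_nonneg G hbias 0 X
      linarith
    | succ k ih =>
      have h1 : (k + 1) * n = k * n + n := by ring
      rw [h1, pow_succ]
      calc 1 - absorbed G (k * n + n) X ≤ (1 - ε) * (1 - absorbed G (k * n) X) :=
            hcontr (k * n) X
        _ ≤ (1 - ε) ^ k * (1 - ε) := by
            rw [mul_comm]
            refine mul_le_mul_of_nonneg_right ih (by linarith)
  obtain ⟨k, hk⟩ := exists_pow_lt_of_lt_one hδ (show 1 - ε < 1 by linarith)
  exact ⟨k * n, lt_of_le_of_lt (hiter k) hk⟩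

end Absorb

section Final
variable {V : Type} [Fintype V] [DecidableEq V] (G : FitnessGraph V) [Nonempty V]

theorem pointwise_ineq {q : QType V} (h : GoodQ q) :
    (if q.2.2.2 = Finset.univ then (1:ℝ) else 0) + (if q.2.2.1 = Finset.univ then (1:ℝ) else 0)
      ≤ (if q.1 = Finset.univ then (1:ℝ) else 0) + (if q.2.1 = Finset.univ then (1:ℝ) else 0)
        + (if q.1 = ∅ ∨ q.1 = Finset.univ then (0:ℝ) else 1) := by
  obtain ⟨h1, h2, h3⟩ := h
  by_cases hC : q.2.2.1 = Finset.univ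
  · have hA : q.1 = Finset.univ := Finset.univ_subset_iff.mp (hC ▸ h1)
    have hB : q.2.1 = Finset.univ := Finset.univ_subset_iff.mp (hC ▸ h2)
    simp only [hA, hB, hC, if_pos rfl]
    split_ifs <;> norm_num
  · rw [if_neg hC]
    by_cases hD : q.2.2.2 = Finset.univ
    · rw [if_pos hD]
      by_cases hA : q.1 = Finset.univ
      · rw [if_pos hA]
        split_ifs <;> norm_num
      · by_cases hA0 : q.1 = ∅
        · have hB : q.2.1 = Finset.univ := by
            rw [hA0, Finset.empty_union] at h3
            rw [h3, hD]
          rw [if_neg hA, if_pos hB]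
          split_ifs <;> norm_num
        · rw [if_neg hA, if_neg (by tauto : ¬(q.1 = ∅ ∨ q.1 = Finset.univ))]
          split_ifs <;> norm_num
    · rw [if_neg hD]
      split_ifs <;> norm_num

theorem coupling_ineq (hbias : G.MutantBiased) (S T : Finset V) (t : ℕ) :
    powK (lstep G) t (S ∪ T) Finset.univ + powK (lstep G) t (S ∩ T) Finset.univ
      ≤ powK (lstep G) t S Finset.univ + powK (lstep G) t T Finset.univ
        + (1 - absorbed G t S) := by
  classical
  set q₀ : QType V := (S, T, S ∩ T, S ∪ T) with hq₀
  have hGood : GoodQ q₀ :=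
    ⟨Finset.inter_subset_left, Finset.inter_subset_right, rfl⟩
  set fU : Finset V → ℝ := fun Y => if Y = Finset.univ then 1 else 0 with hfU
  set gN : Finset V → ℝ := fun Y => if Y = ∅ ∨ Y = Finset.univ then 0 else 1 with hgN
  have hsumfU : ∀ Z : Finset V, ∑ Y, powK (lstep G) t Z Y * fU Y
      = powK (lstep G) t Z Finset.univ := by
    intro Z
    simp only [hfU, mul_ite, mul_one, mul_zero, Finset.sum_ite_eq', Finset.mem_univ, if_true]
  have mA : ∑ q', powK (qstep G) t q₀ q' * fU q'.1 = powK (lstep G) t S Finset.univ := by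
    have h := qpow_marginal G (fun q => q.1) (fun e q => rfl) t fU q₀
    rw [hsumfU] at h
    exact h
  have mB : ∑ q', powK (qstep G) t q₀ q' * fU q'.2.1 = powK (lstep G) t T Finset.univ := by
    have h := qpow_marginal G (fun q => q.2.1) (fun e q => rfl) t fU q₀
    rw [hsumfU] at h
    exact h
  have mC : ∑ q', powK (qstep G) t q₀ q' * fU q'.2.2.1
      = powK (lstep G) t (S ∩ T) Finset.univ := by
    have h := qpow_marginal G (fun q => q.2.2.1) (fun e q => rfl) t fU q₀
    rw [hsumfU] at h
    exact h
  have mD : ∑ q', powK (qstep G) t q₀ q' * fU q'.2.2.2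
      = powK (lstep G) t (S ∪ T) Finset.univ := by
    have h := qpow_marginal G (fun q => q.2.2.2) (fun e q => rfl) t fU q₀
    rw [hsumfU] at h
    exact h
  have mg : ∑ q', powK (qstep G) t q₀ q' * gN q'.1 = 1 - absorbed G t S := by
    have h := qpow_marginal G (fun q => q.1) (fun e q => rfl) t gN q₀
    have h2 : ∑ Y, powK (lstep G) t S Y * gN Y = 1 - absorbed G t S := by
      simp only [hgN]
      exact sum_g_eq G hbias t S
    exact h.trans h2
  have hmain : ∑ q', powK (qstep G) t q₀ q' * (fU q'.2.2.2 + fU q'.2.2.1)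
      ≤ ∑ q', powK (qstep G) t q₀ q' * (fU q'.1 + fU q'.2.1 + gN q'.1) := by
    refine Finset.sum_le_sum fun q' _ => ?_
    by_cases hP : powK (qstep G) t q₀ q' = 0
    · rw [hP]; simp
    · refine mul_le_mul_of_nonneg_left ?_ (powK_nonneg (qstep_nonneg G hbias) t q₀ q')
      have hg : GoodQ q' := qpow_good G hbias t hGood hP
      simpa [hfU, hgN] using pointwise_ineq hg
  simp only [mul_add, Finset.sum_add_distrib] at hmain
  rw [mA, mB, mC, mD] at hmain
  linarith [hmain, mg]

end Final

/-- On a mutant-biased fitness graph the fixation probability is a submodular set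
function: `fp(S) + fp(T) ≥ fp(S ∪ T) + fp(S ∩ T)` for all seed sets `S, T`. -/
theorem fp_submodular (G : FitnessGraph V) (hbias : G.MutantBiased) (S T : Finset V) :
    G.fp (S ∪ T) + G.fp (S ∩ T) ≤ G.fp S + G.fp T := by
  by_cases hV : Nonempty V
  case neg =>
    have hsub : Subsingleton (Finset V) := ⟨fun a b => by
      ext x
      exact (hV ⟨x⟩).elim⟩
    rw [Subsingleton.elim (S ∪ T) S, Subsingleton.elim (S ∩ T) T]
  case pos =>
    haveI := hV
    have hl0 : ∀ X Y : Finset V, 0 ≤ lstep G X Y := lstep_nonneg G hbias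
    have hl1 : ∀ X : Finset V, ∑ Y, lstep G X Y = 1 := lstep_rowsum G
    rw [fp_eq_fpl G hbias, fp_eq_fpl G hbias, fp_eq_fpl G hbias, fp_eq_fpl G hbias]
    refine le_of_forall_pos_le_add fun δ hδ => ?_
    obtain ⟨t₀, ht₀⟩ := absorbed_eventually G hbias S hδ
    have key2 : ∀ t s : ℕ, powK (lstep G) t (S ∪ T) Finset.univ
        + powK (lstep G) s (S ∩ T) Finset.univ
        ≤ absP (lstep G) Finset.univ S + absP (lstep G) Finset.univ T + δ := by
      intro t s
      set t' := max (max t s) t₀ with ht'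
      have m1 : powK (lstep G) t (S ∪ T) Finset.univ
          ≤ powK (lstep G) t' (S ∪ T) Finset.univ :=
        powK_mono_absorbing hl0 (lstep_univ_univ G) _
          (le_trans (le_max_left t s) (le_max_left _ t₀))
      have m2 : powK (lstep G) s (S ∩ T) Finset.univ
          ≤ powK (lstep G) t' (S ∩ T) Finset.univ :=
        powK_mono_absorbing hl0 (lstep_univ_univ G) _
          (le_trans (le_max_right t s) (le_max_left _ t₀))
      have hc := coupling_ineq G hbias S T t'
      have ha : powK (lstep G) t' S Finset.univ ≤ absP (lstep G) Finset.univ S :=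
        le_absP hl0 hl1 _ S t'
      have hb : powK (lstep G) t' T Finset.univ ≤ absP (lstep G) Finset.univ T :=
        le_absP hl0 hl1 _ T t'
      have habs : 1 - absorbed G t' S < δ := by
        have hmm := absorbed_mono G hbias S (le_max_right (max t s) t₀)
        simp only at hmm
        linarith
      linarith
    have h2 : absP (lstep G) Finset.univ (S ∪ T)
        ≤ (absP (lstep G) Finset.univ S + absP (lstep G) Finset.univ T + δ)
          - absP (lstep G) Finset.univ (S ∩ T) := by
      refine ciSup_le fun t => ?_
      rw [le_sub_iff_add_le]
      have h3 : absP (lstep G) Finset.univ (S ∩ T)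
          ≤ (absP (lstep G) Finset.univ S + absP (lstep G) Finset.univ T + δ)
            - powK (lstep G) t (S ∪ T) Finset.univ := by
        refine ciSup_le fun s => ?_
        have := key2 t s
        linarith
      linarith
    linarith
end

section
/- Let 𝒢 be a mutant-biased fitness graph and k ≥ 1 a budget. Let S_gr be any seed set of size k produced by the greedy algorithm, i.e., S₀ = ∅ and for i = 0,…,k−1, S_{i+1} = S_i ∪ {u_i} where u_i maximizes fp_𝒢(S_i ∪ {u}) over all u ∈ V, with S_gr = S_k. Then fp_𝒢(S_gr) ≥ (1 − 1/e) · max{ fp_𝒢(S) : S ⊆ V, |S| ≤ k }. -/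
open Finset
open scoped Classical

variable {V : Type} [Fintype V] [DecidableEq V]

/-! ### Auxiliary development -/

namespace FitnessGraph

variable (G : FitnessGraph V)

lemma fit_pos (X : Finset V) (u : V) : 0 < G.fit X u := by
  unfold fit; split
  · exact G.m_pos u
  · exact G.r_pos u

lemma fit_nonneg (X : Finset V) (u : V) : 0 ≤ G.fit X u := (G.fit_pos X u).le

lemma fit_le_m (hb : G.MutantBiased) (X : Finset V) (u : V) : G.fit X u ≤ G.m u := by
  unfold fit; split
  · exact le_refl _
  · exact hb u

/-- Upper bound on total fitness. -/
noncomputable def Cmax : ℝ := ∑ u, G.m u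

lemma totalFit_nonneg (X : Finset V) : 0 ≤ G.totalFit X :=
  Finset.sum_nonneg fun u _ => G.fit_nonneg X u

lemma totalFit_pos [Nonempty V] (X : Finset V) : 0 < G.totalFit X :=
  Finset.sum_pos (fun u _ => G.fit_pos X u) Finset.univ_nonempty

lemma totalFit_le_Cmax (hb : G.MutantBiased) (X : Finset V) : G.totalFit X ≤ G.Cmax :=
  Finset.sum_le_sum fun u _ => G.fit_le_m hb X u

lemma Cmax_pos [Nonempty V] : 0 < G.Cmax :=
  Finset.sum_pos (fun u _ => G.m_pos u) Finset.univ_nonempty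

/-- One-step averaging operator conditioned on `u` reproducing from configuration `X`. -/
noncomputable def hop (φ : Finset V → ℝ) (X : Finset V) (u : V) : ℝ :=
  ∑ v, G.w u v * φ (moranNext X u v)

lemma hop_const (c : ℝ) (X : Finset V) (u : V) : G.hop (fun _ => c) X u = c := by
  simp only [hop, ← Finset.sum_mul, G.w_rowsum u, one_mul]

lemma hop_mono {φ ψ : Finset V → ℝ} (h : ∀ Y, φ Y ≤ ψ Y) (X : Finset V) (u : V) :
    G.hop φ X u ≤ G.hop ψ X u :=
  Finset.sum_le_sum fun v _ => mul_le_mul_of_nonneg_left (h _) (G.w_nonneg u v)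

lemma hop_nonneg {φ : Finset V → ℝ} (h : ∀ Y, 0 ≤ φ Y) (X : Finset V) (u : V) :
    0 ≤ G.hop φ X u :=
  Finset.sum_nonneg fun v _ => mul_nonneg (G.w_nonneg u v) (h _)

lemma hop_le_of_le {φ : Finset V → ℝ} {c : ℝ} (h : ∀ Y, φ Y ≤ c) (X : Finset V) (u : V) :
    G.hop φ X u ≤ c := by
  calc G.hop φ X u ≤ G.hop (fun _ => c) X u := G.hop_mono h X u
  _ = c := G.hop_const c X u

lemma hop_sub (φ ψ : Finset V → ℝ) (X : Finset V) (u : V) :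
    G.hop (fun Y => φ Y - ψ Y) X u = G.hop φ X u - G.hop ψ X u := by
  simp only [hop, mul_sub, Finset.sum_sub_distrib]

lemma sum_indicator_mul (n : Finset V) (φ : Finset V → ℝ) :
    ∑ Y : Finset V, (if n = Y then (1:ℝ) else 0) * φ Y = φ n := by
  simp [ite_mul]

/-- Applying `step` to a test function collapses to the `hop` form. -/
lemma step_apply (X : Finset V) (φ : Finset V → ℝ) :
    ∑ Y, G.step X Y * φ Y
      = ∑ u, (G.fit X u / G.totalFit X) * G.hop φ X u := by
  unfold step hop
  simp only [Finset.sum_mul]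
  rw [Finset.sum_comm]
  refine Finset.sum_congr rfl fun u _ => ?_
  rw [Finset.mul_sum, Finset.sum_comm]
  refine Finset.sum_congr rfl fun v _ => ?_
  have h1 : ∀ Y : Finset V,
      G.fit X u / G.totalFit X * G.w u v * (if moranNext X u v = Y then 1 else 0) * φ Y
      = (G.fit X u / G.totalFit X * G.w u v) *
        ((if moranNext X u v = Y then (1:ℝ) else 0) * φ Y) := fun Y => by ring
  rw [Finset.sum_congr rfl fun Y _ => h1 Y, ← Finset.mul_sum,
    sum_indicator_mul (moranNext X u v) φ, mul_assoc]

lemma step_nonneg (X Y : Finset V) : 0 ≤ G.step X Y := by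
  refine Finset.sum_nonneg fun u _ => Finset.sum_nonneg fun v _ => ?_
  have h1 : (0:ℝ) ≤ G.fit X u / G.totalFit X :=
    div_nonneg (G.fit_nonneg X u) (G.totalFit_nonneg X)
  have h2 : (0:ℝ) ≤ (if moranNext X u v = Y then (1:ℝ) else 0) := by positivity
  exact mul_nonneg (mul_nonneg h1 (G.w_nonneg u v)) h2

lemma step_rowsum [Nonempty V] (X : Finset V) : ∑ Y, G.step X Y = 1 := by
  have h := G.step_apply X (fun _ => 1)
  simp only [mul_one] at h
  rw [h]
  have : ∀ u : V, G.fit X u / G.totalFit X * G.hop (fun _ => (1:ℝ)) X u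
      = G.fit X u / G.totalFit X := fun u => by rw [G.hop_const, mul_one]
  rw [Finset.sum_congr rfl fun u _ => this u, ← Finset.sum_div, ← totalFit,
    div_self (G.totalFit_pos X).ne']


lemma stepN_nonneg (t : ℕ) (X Y : Finset V) : 0 ≤ G.stepN t X Y := by
  induction t generalizing X Y with
  | zero => unfold stepN; positivity
  | succ t ih =>
      unfold stepN
      exact Finset.sum_nonneg fun Z _ => mul_nonneg (ih X Z) (G.step_nonneg Z Y)

lemma stepN_rowsum [Nonempty V] (t : ℕ) (X : Finset V) : ∑ Y, G.stepN t X Y = 1 := by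
  induction t generalizing X with
  | zero => simp [stepN]
  | succ t ih =>
      unfold stepN
      rw [Finset.sum_comm]
      have : ∀ Z : Finset V, ∑ Y, G.stepN t X Z * G.step Z Y = G.stepN t X Z := fun Z => by
        rw [← Finset.mul_sum, G.step_rowsum Z, mul_one]
      rw [Finset.sum_congr rfl fun Z _ => this Z, ih X]

lemma stepN_le_one [Nonempty V] (t : ℕ) (X Y : Finset V) : G.stepN t X Y ≤ 1 := by
  rw [← G.stepN_rowsum t X]
  exact Finset.single_le_sum (fun Z _ => G.stepN_nonneg t X Z) (Finset.mem_univ Y)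

lemma stepN_succ_front (t : ℕ) (X Y : Finset V) :
    G.stepN (t + 1) X Y = ∑ Z, G.step X Z * G.stepN t Z Y := by
  induction t generalizing X Y with
  | zero =>
      show (∑ Z, G.stepN 0 X Z * G.step Z Y) = _
      simp [stepN, ite_mul, mul_ite]
  | succ t ih =>
      show (∑ Z, G.stepN (t+1) X Z * G.step Z Y) = _
      rw [Finset.sum_congr rfl fun Z _ => by rw [ih X Z]]
      rw [show (∑ Z, (∑ W, G.step X W * G.stepN t W Z) * G.step Z Y)
          = ∑ W, G.step X W * ∑ Z, G.stepN t W Z * G.step Z Y from by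
        simp only [Finset.sum_mul, Finset.mul_sum]
        rw [Finset.sum_comm]
        exact Finset.sum_congr rfl fun Z _ => Finset.sum_congr rfl fun W _ => by ring]
      rfl

lemma moranNext_univ (u v : V) : moranNext (Finset.univ : Finset V) u v = Finset.univ := by
  simp [moranNext]

lemma step_univ_univ [Nonempty V] :
    G.step (Finset.univ : Finset V) (Finset.univ : Finset V) = 1 := by
  unfold step
  simp only [moranNext_univ, eq_self_iff_true, if_true, mul_one]
  have : ∀ u : V, ∑ v, G.fit Finset.univ u / G.totalFit Finset.univ * G.w u v
      = G.fit Finset.univ u / G.totalFit Finset.univ := fun u => by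
    rw [← Finset.mul_sum, G.w_rowsum u, mul_one]
  rw [Finset.sum_congr rfl fun u _ => this u, ← Finset.sum_div, ← totalFit,
    div_self (G.totalFit_pos _).ne']

lemma stepN_univ_mono [Nonempty V] (t : ℕ) (X : Finset V) :
    G.stepN t X Finset.univ ≤ G.stepN (t + 1) X Finset.univ := by
  have h : G.stepN t X Finset.univ * G.step Finset.univ Finset.univ
      ≤ ∑ Z, G.stepN t X Z * G.step Z Finset.univ :=
    Finset.single_le_sum
      (fun Z _ => mul_nonneg (G.stepN_nonneg t X Z) (G.step_nonneg Z Finset.univ))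
      (Finset.mem_univ Finset.univ)
  rw [G.step_univ_univ, mul_one] at h
  exact h

lemma bddAbove_stepN [Nonempty V] (X : Finset V) :
    BddAbove (Set.range fun t => G.stepN t X Finset.univ) := by
  refine ⟨1, ?_⟩
  rintro _ ⟨t, rfl⟩
  exact G.stepN_le_one t X Finset.univ

lemma fp_nonneg [Nonempty V] (X : Finset V) : 0 ≤ G.fp X :=
  le_trans (G.stepN_nonneg 0 X Finset.univ) (le_ciSup (G.bddAbove_stepN X) 0)

lemma fp_le_one [Nonempty V] (X : Finset V) : G.fp X ≤ 1 :=
  ciSup_le fun t => G.stepN_le_one t X Finset.univ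

lemma fp_univ [Nonempty V] : G.fp (Finset.univ : Finset V) = 1 := by
  refine le_antisymm (G.fp_le_one _) ?_
  have h0 : G.stepN 0 Finset.univ Finset.univ = 1 := by simp [stepN]
  calc (1:ℝ) = G.stepN 0 Finset.univ Finset.univ := h0.symm
  _ ≤ G.fp Finset.univ := le_ciSup (G.bddAbove_stepN _) 0

lemma stepN_empty [Nonempty V] (t : ℕ) (Y : Finset V) :
    G.stepN t (∅ : Finset V) Y = if (∅ : Finset V) = Y then 1 else 0 := by
  have hstep : ∀ Y : Finset V, G.step (∅ : Finset V) Y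
      = if (∅ : Finset V) = Y then 1 else 0 := by
    intro Y
    unfold step
    have hm : ∀ u v : V, moranNext (∅ : Finset V) u v = (∅ : Finset V) := by
      intro u v; simp [moranNext]
    simp only [hm]
    rw [show (∑ u : V, ∑ v, G.fit ∅ u / G.totalFit ∅ * G.w u v *
          (if (∅:Finset V) = Y then (1:ℝ) else 0))
        = (∑ u : V, ∑ v, G.fit ∅ u / G.totalFit ∅ * G.w u v) *
          (if (∅:Finset V) = Y then (1:ℝ) else 0) from by
      simp only [Finset.sum_mul]]
    have : ∀ u : V, ∑ v, G.fit ∅ u / G.totalFit ∅ * G.w u v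
        = G.fit ∅ u / G.totalFit ∅ := fun u => by
      rw [← Finset.mul_sum, G.w_rowsum u, mul_one]
    rw [Finset.sum_congr rfl fun u _ => this u, ← Finset.sum_div, ← totalFit,
      div_self (G.totalFit_pos _).ne', one_mul]
  induction t generalizing Y with
  | zero => rfl
  | succ t ih =>
      unfold stepN
      rw [Finset.sum_congr rfl fun Z (_ : Z ∈ Finset.univ) => by rw [ih Z]]
      simp only [ite_mul, one_mul, zero_mul]
      rw [Finset.sum_ite_eq Finset.univ (∅ : Finset V) (fun Z => G.step Z Y)]
      simp [hstep Y]

lemma fp_empty [Nonempty V] : G.fp (∅ : Finset V) = 0 := by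
  have h : ∀ t, G.stepN t (∅ : Finset V) Finset.univ = 0 := by
    intro t
    rw [G.stepN_empty t]
    have : (∅ : Finset V) ≠ Finset.univ := by
      symm; exact Finset.nonempty_iff_ne_empty.mp Finset.univ_nonempty
    simp [this]
  unfold fp
  simp only [h]
  exact ciSup_const

lemma tendsto_stepN_univ [Nonempty V] (X : Finset V) :
    Filter.Tendsto (fun t => G.stepN t X Finset.univ) Filter.atTop (nhds (G.fp X)) :=
  tendsto_atTop_ciSup (monotone_nat_of_le_succ fun t => G.stepN_univ_mono t X)
    (G.bddAbove_stepN X)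

lemma fp_harmonic [Nonempty V] (X : Finset V) :
    G.fp X = ∑ Y, G.step X Y * G.fp Y := by
  have h1 : Filter.Tendsto (fun t => G.stepN (t + 1) X Finset.univ) Filter.atTop
      (nhds (G.fp X)) :=
    (G.tendsto_stepN_univ X).comp (Filter.tendsto_add_atTop_nat 1)
  have h2 : (fun t => G.stepN (t + 1) X Finset.univ)
      = fun t => ∑ Z, G.step X Z * G.stepN t Z Finset.univ :=
    funext fun t => G.stepN_succ_front t X Finset.univ
  rw [h2] at h1
  have h3 : Filter.Tendsto (fun t => ∑ Z, G.step X Z * G.stepN t Z Finset.univ)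
      Filter.atTop (nhds (∑ Z, G.step X Z * G.fp Z)) :=
    tendsto_finset_sum _ fun Z _ => (G.tendsto_stepN_univ Z).const_mul _
  exact tendsto_nhds_unique h1 h3

/-- The key harmonicity identity for the fixation probability. -/
lemma fp_harm [Nonempty V] (X : Finset V) :
    G.totalFit X * G.fp X = ∑ u, G.fit X u * G.hop G.fp X u := by
  rw [G.fp_harmonic X, G.step_apply X G.fp, Finset.mul_sum]
  refine Finset.sum_congr rfl fun u _ => ?_
  have hF : G.totalFit X ≠ 0 := (G.totalFit_pos X).ne'
  field_simp


/-- Value iteration from above: at each step, the configuration `∅` is clamped to `0`,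
while all other configurations are averaged by the lazy one-step kernel. -/
noncomputable def wI (G : FitnessGraph V) : ℕ → Finset V → ℝ
  | 0, _ => 1
  | (t+1), X =>
      if X = ∅ then 0
      else (∑ u, G.fit X u * G.hop (wI G t) X u
            + (G.Cmax - G.totalFit X) * wI G t X) / G.Cmax

lemma wI_zero (X : Finset V) : G.wI 0 X = 1 := rfl

lemma wI_succ_empty (t : ℕ) : G.wI (t+1) (∅ : Finset V) = 0 := by
  simp [wI]

lemma wI_succ (t : ℕ) {X : Finset V} (hX : X ≠ ∅) :
    G.wI (t+1) X = (∑ u, G.fit X u * G.hop (G.wI t) X u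
      + (G.Cmax - G.totalFit X) * G.wI t X) / G.Cmax := by
  simp [wI, hX]

lemma wI_nonneg [Nonempty V] (hb : G.MutantBiased) (t : ℕ) (X : Finset V) : 0 ≤ G.wI t X := by
  induction t generalizing X with
  | zero => exact zero_le_one
  | succ t ih =>
      by_cases hX : X = ∅
      · rw [hX, G.wI_succ_empty]
      · rw [G.wI_succ t hX]
        have h1 : 0 ≤ ∑ u, G.fit X u * G.hop (G.wI t) X u :=
          Finset.sum_nonneg fun u _ =>
            mul_nonneg (G.fit_nonneg X u) (G.hop_nonneg (fun Y => ih Y) X u)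
        have h2 : 0 ≤ (G.Cmax - G.totalFit X) * G.wI t X :=
          mul_nonneg (sub_nonneg.mpr (G.totalFit_le_Cmax hb X)) (ih X)
        have hC := G.Cmax_pos (V := V)
        exact div_nonneg (by linarith) hC.le

lemma wI_le_one [Nonempty V] (hb : G.MutantBiased) (t : ℕ) (X : Finset V) : G.wI t X ≤ 1 := by
  induction t generalizing X with
  | zero => exact le_refl 1
  | succ t ih =>
      by_cases hX : X = ∅
      · rw [hX, G.wI_succ_empty]; exact zero_le_one
      · rw [G.wI_succ t hX]
        rw [div_le_one (G.Cmax_pos)]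
        have h1 : ∑ u, G.fit X u * G.hop (G.wI t) X u ≤ ∑ u, G.fit X u :=
          Finset.sum_le_sum fun u _ => by
            have := G.hop_le_of_le (fun Y => ih Y) X u
            nlinarith [G.fit_nonneg X u]
        have h2 : (G.Cmax - G.totalFit X) * G.wI t X ≤ G.Cmax - G.totalFit X := by
          have h3 : 0 ≤ G.Cmax - G.totalFit X := sub_nonneg.mpr (G.totalFit_le_Cmax hb X)
          nlinarith [ih X]
        have h4 : (∑ u, G.fit X u) = G.totalFit X := rfl
        linarith

lemma wI_antitone [Nonempty V] (hb : G.MutantBiased) (t : ℕ) (X : Finset V) : G.wI (t+1) X ≤ G.wI t X := by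
  induction t generalizing X with
  | zero => exact G.wI_le_one hb 1 X
  | succ t ih =>
      by_cases hX : X = ∅
      · rw [hX, G.wI_succ_empty, G.wI_succ_empty]
      · have hC := G.Cmax_pos (V := V)
        conv_lhs => rw [G.wI_succ (t+1) hX]
        conv_rhs => rw [G.wI_succ t hX]
        rw [div_le_div_iff_of_pos_right hC]
        have h1 : ∑ u, G.fit X u * G.hop (G.wI (t+1)) X u
            ≤ ∑ u, G.fit X u * G.hop (G.wI t) X u :=
          Finset.sum_le_sum fun u _ => mul_le_mul_of_nonneg_left
            (G.hop_mono (fun Y => ih Y) X u) (G.fit_nonneg X u)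
        have h2 : (G.Cmax - G.totalFit X) * G.wI (t+1) X
            ≤ (G.Cmax - G.totalFit X) * G.wI t X :=
          mul_le_mul_of_nonneg_left (ih X)
            (sub_nonneg.mpr (G.totalFit_le_Cmax hb X))
        linarith

lemma hop_univ (φ : Finset V → ℝ) (u : V) :
    G.hop φ (Finset.univ : Finset V) u = φ Finset.univ := by
  simp only [hop, moranNext_univ, ← Finset.sum_mul, G.w_rowsum u, one_mul]

lemma wI_univ [Nonempty V] (t : ℕ) : G.wI t (Finset.univ : Finset V) = 1 := by
  induction t with
  | zero => rfl
  | succ t ih =>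
      have hne : (Finset.univ : Finset V) ≠ ∅ :=
        Finset.nonempty_iff_ne_empty.mp Finset.univ_nonempty
      rw [G.wI_succ t hne]
      simp only [G.hop_univ, ih, mul_one]
      have h4 : (∑ u, G.fit Finset.univ u) = G.totalFit (Finset.univ : Finset V) := rfl
      have hC := (G.Cmax_pos (V := V)).ne'
      rw [h4]
      field_simp
      ring

lemma fp_eq_lazy [Nonempty V] (X : Finset V) :
    G.fp X = (∑ u, G.fit X u * G.hop G.fp X u
      + (G.Cmax - G.totalFit X) * G.fp X) / G.Cmax := by
  rw [← G.fp_harm X]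
  have hC := (G.Cmax_pos (V := V)).ne'
  field_simp
  ring

lemma fp_le_wI [Nonempty V] (hb : G.MutantBiased) (t : ℕ) (X : Finset V) : G.fp X ≤ G.wI t X := by
  induction t generalizing X with
  | zero => exact G.fp_le_one X
  | succ t ih =>
      by_cases hX : X = ∅
      · rw [hX, G.wI_succ_empty, G.fp_empty]
      · have hC := G.Cmax_pos (V := V)
        conv_lhs => rw [G.fp_eq_lazy X]
        conv_rhs => rw [G.wI_succ t hX]
        rw [div_le_div_iff_of_pos_right hC]
        have h1 : ∑ u, G.fit X u * G.hop G.fp X u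
            ≤ ∑ u, G.fit X u * G.hop (G.wI t) X u :=
          Finset.sum_le_sum fun u _ => mul_le_mul_of_nonneg_left
            (G.hop_mono (fun Y => ih Y) X u) (G.fit_nonneg X u)
        have h2 : (G.Cmax - G.totalFit X) * G.fp X
            ≤ (G.Cmax - G.totalFit X) * G.wI t X :=
          mul_le_mul_of_nonneg_left (ih X)
            (sub_nonneg.mpr (G.totalFit_le_Cmax hb X))
        linarith

/-- Pointwise infimum of the value iteration. -/
noncomputable def wInf (G : FitnessGraph V) (X : Finset V) : ℝ := ⨅ t, G.wI t X

lemma bddBelow_wI [Nonempty V] (hb : G.MutantBiased) (X : Finset V) :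
    BddBelow (Set.range fun t => G.wI t X) := by
  refine ⟨0, ?_⟩
  rintro _ ⟨t, rfl⟩
  exact G.wI_nonneg hb t X

lemma fp_le_wInf [Nonempty V] (hb : G.MutantBiased) (X : Finset V) : G.fp X ≤ G.wInf X :=
  le_ciInf fun t => G.fp_le_wI hb t X

lemma tendsto_wI [Nonempty V] (hb : G.MutantBiased) (X : Finset V) :
    Filter.Tendsto (fun t => G.wI t X) Filter.atTop (nhds (G.wInf X)) :=
  tendsto_atTop_ciInf (antitone_nat_of_succ_le fun t => G.wI_antitone hb t X)
    (G.bddBelow_wI hb X)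

lemma wInf_univ [Nonempty V] : G.wInf (Finset.univ : Finset V) = 1 := by
  unfold wInf
  simp only [G.wI_univ]
  exact ciInf_const

lemma wInf_empty [Nonempty V] (hb : G.MutantBiased) : G.wInf (∅ : Finset V) = 0 := by
  refine le_antisymm ?_ ?_
  · calc G.wInf (∅ : Finset V) ≤ G.wI 1 ∅ := ciInf_le (G.bddBelow_wI hb ∅) (1 : ℕ)
    _ = 0 := G.wI_succ_empty 0
  · rw [← G.fp_empty]
    exact G.fp_le_wInf hb ∅

lemma wInf_harm [Nonempty V] (hb : G.MutantBiased) {X : Finset V} (hX : X ≠ ∅) :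
    G.totalFit X * G.wInf X = ∑ u, G.fit X u * G.hop G.wInf X u := by
  have h1 : Filter.Tendsto (fun t => G.wI (t + 1) X) Filter.atTop (nhds (G.wInf X)) :=
    (G.tendsto_wI hb X).comp (Filter.tendsto_add_atTop_nat 1)
  have h2 : (fun t => G.wI (t + 1) X)
      = fun t => (∑ u, G.fit X u * G.hop (G.wI t) X u
        + (G.Cmax - G.totalFit X) * G.wI t X) / G.Cmax :=
    funext fun t => G.wI_succ t hX
  rw [h2] at h1
  have h3 : Filter.Tendsto
      (fun t => (∑ u, G.fit X u * G.hop (G.wI t) X u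
        + (G.Cmax - G.totalFit X) * G.wI t X) / G.Cmax) Filter.atTop
      (nhds ((∑ u, G.fit X u * G.hop G.wInf X u
        + (G.Cmax - G.totalFit X) * G.wInf X) / G.Cmax)) := by
    apply Filter.Tendsto.div_const
    apply Filter.Tendsto.add
    · apply tendsto_finset_sum
      intro u _
      apply Filter.Tendsto.const_mul
      apply tendsto_finset_sum
      intro v _
      exact (G.tendsto_wI hb (moranNext X u v)).const_mul _
    · exact (G.tendsto_wI hb X).const_mul _
  have h4 := tendsto_nhds_unique h1 h3
  have hC := (G.Cmax_pos (V := V)).ne'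
  field_simp at h4
  linarith

lemma exists_boundary (X : Finset V) (hne : X ≠ ∅) (hnu : X ≠ Finset.univ) :
    ∃ u ∈ X, ∃ v, v ∉ X ∧ 0 < G.w u v := by
  obtain ⟨a, ha⟩ := Finset.nonempty_iff_ne_empty.mpr hne
  obtain ⟨b, hbX⟩ : ∃ b, b ∉ X := by
    by_contra h
    push_neg at h
    exact hnu (Finset.eq_univ_iff_forall.mpr h)
  have key : ∀ b : V, Relation.ReflTransGen (fun x y => 0 < G.w x y) a b → b ∉ X →
      ∃ u ∈ X, ∃ v, v ∉ X ∧ 0 < G.w u v := by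
    intro b hpath
    induction hpath with
    | refl => intro h; exact absurd ha h
    | @tail c d hac hcd ih =>
        intro hdX
        by_cases hc : c ∈ X
        · exact ⟨c, hc, d, hdX, hcd⟩
        · exact ih hc
  exact key b (G.strongly_connected a b) hbX

lemma wInf_eq_fp [Nonempty V] (hb : G.MutantBiased) (X : Finset V) : G.wInf X = G.fp X := by
  set δ : Finset V → ℝ := fun Y => G.wInf Y - G.fp Y with hδdef
  have hδ0 : ∀ Y, 0 ≤ δ Y := fun Y => sub_nonneg.mpr (G.fp_le_wInf hb Y)
  have hδe : δ (∅ : Finset V) = 0 := by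
    simp [hδdef, G.wInf_empty hb, G.fp_empty]
  have hδu : δ (Finset.univ : Finset V) = 0 := by
    simp [hδdef, G.wInf_univ, G.fp_univ]
  have hharm : ∀ Y : Finset V, Y ≠ ∅ →
      G.totalFit Y * δ Y = ∑ u, G.fit Y u * G.hop δ Y u := by
    intro Y hY
    have h1 := G.wInf_harm hb hY
    have h2 := G.fp_harm Y
    have h3 : ∀ u, G.hop δ Y u = G.hop G.wInf Y u - G.hop G.fp Y u := fun u =>
      G.hop_sub G.wInf G.fp Y u
    simp only [hδdef, h3, mul_sub, Finset.sum_sub_distrib]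
    have h4 : ∀ u, G.hop (fun Y => G.wInf Y - G.fp Y) Y u = G.hop G.wInf Y u - G.hop G.fp Y u :=
      fun u => G.hop_sub G.wInf G.fp Y u
    simp only [h4, mul_sub, Finset.sum_sub_distrib]
    rw [← h1, ← h2]
  obtain ⟨X₀, _, hmax⟩ := Finset.exists_max_image (Finset.univ : Finset (Finset V)) δ
    ⟨∅, Finset.mem_univ ∅⟩
  have hmax' : ∀ Y : Finset V, δ Y ≤ δ X₀ := fun Y => hmax Y (Finset.mem_univ Y)
  set M := δ X₀ with hMdef
  have hprop : ∀ Y : Finset V, Y ≠ ∅ → δ Y = M →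
      ∀ u v : V, 0 < G.w u v → δ (moranNext Y u v) = M := by
    intro Y hY hYM u v hw
    have hle : ∀ u', G.hop δ Y u' ≤ M := fun u' => G.hop_le_of_le hmax' Y u'
    have hsum : ∑ u', G.fit Y u' * (M - G.hop δ Y u') = 0 := by
      have := hharm Y hY
      simp only [mul_sub, Finset.sum_sub_distrib, ← Finset.sum_mul]
      rw [← totalFit, ← this, hYM]
      ring
    have hall := (Finset.sum_eq_zero_iff_of_nonneg fun u' _ =>
      mul_nonneg (G.fit_nonneg Y u') (sub_nonneg.mpr (hle u'))).mp hsum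
    have hhop : G.hop δ Y u = M := by
      have h := hall u (Finset.mem_univ u)
      have hf := G.fit_pos Y u
      have := mul_eq_zero.mp h
      rcases this with h' | h'
      · exact absurd h' hf.ne'
      · linarith [sub_eq_zero.mp h']
    have hsum2 : ∑ v', G.w u v' * (M - δ (moranNext Y u v')) = 0 := by
      simp only [mul_sub, Finset.sum_sub_distrib, ← Finset.sum_mul]
      rw [G.w_rowsum u]
      have : (∑ v', G.w u v' * δ (moranNext Y u v')) = G.hop δ Y u := rfl
      rw [this, hhop]
      ring
    have hall2 := (Finset.sum_eq_zero_iff_of_nonneg fun v' _ =>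
      mul_nonneg (G.w_nonneg u v') (sub_nonneg.mpr (hmax' _))).mp hsum2
    have h := hall2 v (Finset.mem_univ v)
    rcases mul_eq_zero.mp h with h' | h'
    · exact absurd h' hw.ne'
    · linarith [sub_eq_zero.mp h']
  have hreach : ∀ k : ℕ, ∀ Y : Finset V, (Finset.univ \ Y).card ≤ k → Y ≠ ∅ →
      δ Y = M → M = 0 := by
    intro k
    induction k with
    | zero =>
        intro Y hcard hne hYM
        have h0 : (Finset.univ \ Y) = ∅ := Finset.card_eq_zero.mp (Nat.le_zero.mp hcard)
        have hYu : Y = Finset.univ := by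
          have := Finset.sdiff_eq_empty_iff_subset.mp h0
          exact Finset.eq_univ_iff_forall.mpr fun x => this (Finset.mem_univ x)
        rw [← hYM, hYu, hδu]
    | succ k ih =>
        intro Y hcard hne hYM
        by_cases hYu : Y = Finset.univ
        · rw [← hYM, hYu, hδu]
        · obtain ⟨u, huY, v, hvY, hw⟩ := G.exists_boundary Y hne hYu
          have hnext := hprop Y hne hYM u v hw
          have hmn : moranNext Y u v = insert v Y := by simp [moranNext, huY]
          rw [hmn] at hnext
          have hvmem : v ∈ Finset.univ \ Y := Finset.mem_sdiff.mpr ⟨Finset.mem_univ v, hvY⟩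
          have hscard : (Finset.univ \ insert v Y) = (Finset.univ \ Y).erase v := by
            ext x
            simp only [Finset.mem_sdiff, Finset.mem_insert, Finset.mem_erase,
              Finset.mem_univ, true_and]
            tauto
          have hcard2 : (Finset.univ \ insert v Y).card ≤ k := by
            rw [hscard, Finset.card_erase_of_mem hvmem]
            have h1 : 1 ≤ (Finset.univ \ Y).card := Finset.card_pos.mpr ⟨v, hvmem⟩
            omega
          exact ih (insert v Y) hcard2 (Finset.insert_ne_empty v Y) hnext
  have hM : M ≤ 0 := by
    by_contra h
    push_neg at h
    have hX₀ : X₀ ≠ ∅ := by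
      intro h0
      rw [hMdef, h0, hδe] at h
      exact lt_irrefl 0 h
    exact absurd (hreach (Finset.univ \ X₀).card X₀ le_rfl hX₀ rfl) (by linarith)
  have : δ X = 0 := le_antisymm (le_trans (hmax' X) hM) (hδ0 X)
  have := sub_eq_zero.mp this
  linarith [this]


lemma moranNext_mono {X Y : Finset V} (h : X ⊆ Y) (u v : V) :
    moranNext X u v ⊆ moranNext Y u v := by
  unfold moranNext
  by_cases hX : u ∈ X
  · rw [if_pos hX, if_pos (h hX)]
    exact Finset.insert_subset_insert v h
  · rw [if_neg hX]
    by_cases hY : u ∈ Y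
    · rw [if_pos hY]
      exact (Finset.erase_subset v X).trans (h.trans (Finset.subset_insert v Y))
    · rw [if_neg hY]
      exact Finset.erase_subset_erase v h

lemma moranNext_union (A B : Finset V) (u v : V) :
    moranNext (A ∪ B) u v = moranNext A u v ∪ moranNext B u v := by
  unfold moranNext
  by_cases hA : u ∈ A <;> by_cases hB : u ∈ B <;>
    simp only [Finset.mem_union, hA, hB, true_or, or_true, or_self, if_true, if_false] <;>
    ext x <;>
    simp only [Finset.mem_union, Finset.mem_insert, Finset.mem_erase] <;>
    tauto

lemma moranNext_self_subset {A : Finset V} {u : V} (hu : u ∈ A) (v : V) :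
    A ⊆ moranNext A u v := by
  rw [show moranNext A u v = insert v A from if_pos hu]
  exact Finset.subset_insert v A

/-- The master induction: submodular-type comparison between the fixation probability
and the value iteration. -/
lemma master_wI [Nonempty V] (hb : G.MutantBiased) :
    ∀ (t : ℕ) (U I A B : Finset V), U = A ∪ B → I ⊆ A ∩ B →
      G.fp U + G.fp I ≤ G.wI t A + G.wI t B := by
  intro t
  induction t with
  | zero =>
      intro U I A B _ _
      have h1 := G.fp_le_one U
      have h2 := G.fp_le_one I
      simp only [wI_zero]
      linarith
  | succ t ih =>
      have main : ∀ U I A B : Finset V, A ≠ ∅ → B ≠ ∅ → U = A ∪ B → I ⊆ A ∩ B →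
          G.fp U + G.fp I ≤ G.wI (t+1) A + G.wI (t+1) B := by
        intro U I A B hA hB hU hI
        have hC := G.Cmax_pos (V := V)
        have hIA : I ⊆ A := hI.trans Finset.inter_subset_left
        have hIB : I ⊆ B := hI.trans Finset.inter_subset_right
        set s : ℝ := G.wI t A + G.wI t B - G.fp U - G.fp I with hs
        have hs0 : 0 ≤ s := by
          have := ih U I A B hU hI
          simp only [hs]
          linarith
        have keyu : ∀ u : V,
            G.fit U u * (G.hop G.fp U u - G.fp U)
              + G.fit I u * (G.hop G.fp I u - G.fp I)
              - G.fit A u * (G.hop (G.wI t) A u - G.wI t A)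
              - G.fit B u * (G.hop (G.wI t) B u - G.wI t B)
            ≤ G.fit U u * s := by
          intro u
          have hconst : ∀ c : ℝ, ∑ v, G.w u v * c = c := fun c => by
            rw [← Finset.sum_mul, G.w_rowsum u, one_mul]
          have k1 : G.hop G.fp U u + G.hop G.fp I u
              ≤ G.hop (G.wI t) A u + G.hop (G.wI t) B u := by
            have hperv : ∀ v, G.fp (moranNext U u v) + G.fp (moranNext I u v)
                ≤ G.wI t (moranNext A u v) + G.wI t (moranNext B u v) := fun v =>
              ih _ _ _ _ (by rw [hU]; exact moranNext_union A B u v)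
                (Finset.subset_inter (moranNext_mono hIA u v) (moranNext_mono hIB u v))
            have h := Finset.sum_le_sum fun v (_ : v ∈ Finset.univ) =>
              mul_le_mul_of_nonneg_left (hperv v) (G.w_nonneg u v)
            simpa only [hop, mul_add, Finset.sum_add_distrib] using h
          by_cases huA : u ∈ A <;> by_cases huB : u ∈ B
          · -- u ∈ A and u ∈ B
            have huU : u ∈ U := by rw [hU]; exact Finset.mem_union_left B huA
            have fU : G.fit U u = G.m u := by unfold fit; rw [if_pos huU]
            have fA : G.fit A u = G.m u := by unfold fit; rw [if_pos huA]
            have fB : G.fit B u = G.m u := by unfold fit; rw [if_pos huB]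
            have k2 : G.hop G.fp U u + G.fp I
                ≤ G.hop (G.wI t) A u + G.hop (G.wI t) B u := by
              have hperv : ∀ v, G.fp (moranNext U u v) + G.fp I
                  ≤ G.wI t (moranNext A u v) + G.wI t (moranNext B u v) := fun v =>
                ih _ _ _ _ (by rw [hU]; exact moranNext_union A B u v)
                  (Finset.subset_inter (hIA.trans (moranNext_self_subset huA v))
                    (hIB.trans (moranNext_self_subset huB v)))
              have h := Finset.sum_le_sum fun v (_ : v ∈ Finset.univ) =>
                mul_le_mul_of_nonneg_left (hperv v) (G.w_nonneg u v)
              simpa only [hop, mul_add, Finset.sum_add_distrib, hconst] using h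
            by_cases huI : u ∈ I
            · have fI : G.fit I u = G.m u := by unfold fit; rw [if_pos huI]
              have hX : (G.hop G.fp U u - G.fp U) + (G.hop G.fp I u - G.fp I)
                  - (G.hop (G.wI t) A u - G.wI t A)
                  - (G.hop (G.wI t) B u - G.wI t B) ≤ s := by
                simp only [hs]; linarith [k1]
              have h1 := mul_le_mul_of_nonneg_left hX (G.m_pos u).le
              rw [fU, fI, fA, fB]
              linarith [h1]
            · have fI : G.fit I u = G.r u := by unfold fit; rw [if_neg huI]
              have hX : (G.hop G.fp U u - G.fp U) + (G.hop G.fp I u - G.fp I)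
                  - (G.hop (G.wI t) A u - G.wI t A)
                  - (G.hop (G.wI t) B u - G.wI t B) ≤ s := by
                simp only [hs]; linarith [k1]
              have hX2 : (G.hop G.fp U u - G.fp U)
                  - (G.hop (G.wI t) A u - G.wI t A)
                  - (G.hop (G.wI t) B u - G.wI t B) ≤ s := by
                simp only [hs]; linarith [k2]
              have h1 := mul_le_mul_of_nonneg_left hX (G.r_pos u).le
              have h2 := mul_le_mul_of_nonneg_left hX2 (sub_nonneg.mpr (hb u))
              rw [fU, fI, fA, fB]
              linarith [h1, h2]
          · -- u ∈ A, u ∉ B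
            have huU : u ∈ U := by rw [hU]; exact Finset.mem_union_left B huA
            have huI : u ∉ I := fun h => huB (Finset.mem_inter.mp (hI h)).2
            have fU : G.fit U u = G.m u := by unfold fit; rw [if_pos huU]
            have fA : G.fit A u = G.m u := by unfold fit; rw [if_pos huA]
            have fB : G.fit B u = G.r u := by unfold fit; rw [if_neg huB]
            have fI : G.fit I u = G.r u := by unfold fit; rw [if_neg huI]
            have k3 : G.hop G.fp U u + G.fp I
                ≤ G.hop (G.wI t) A u + G.wI t B := by
              have hperv : ∀ v, G.fp (moranNext U u v) + G.fp I
                  ≤ G.wI t (moranNext A u v) + G.wI t B := by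
                intro v
                refine ih _ _ _ _ ?_
                  (Finset.subset_inter (hIA.trans (moranNext_self_subset huA v)) hIB)
                have h1 : moranNext U u v = insert v U := by
                  unfold moranNext; rw [if_pos huU]
                have h2 : moranNext A u v = insert v A := by
                  unfold moranNext; rw [if_pos huA]
                rw [h1, h2, hU]
                ext x
                simp only [Finset.mem_union, Finset.mem_insert]
                tauto
              have h := Finset.sum_le_sum fun v (_ : v ∈ Finset.univ) =>
                mul_le_mul_of_nonneg_left (hperv v) (G.w_nonneg u v)
              simpa only [hop, mul_add, Finset.sum_add_distrib, hconst] using h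
            have hX : (G.hop G.fp U u - G.fp U) + (G.hop G.fp I u - G.fp I)
                - (G.hop (G.wI t) A u - G.wI t A)
                - (G.hop (G.wI t) B u - G.wI t B) ≤ s := by
              simp only [hs]; linarith [k1]
            have hX3 : (G.hop G.fp U u - G.fp U)
                - (G.hop (G.wI t) A u - G.wI t A) ≤ s := by
              simp only [hs]; linarith [k3]
            have h1 := mul_le_mul_of_nonneg_left hX (G.r_pos u).le
            have h2 := mul_le_mul_of_nonneg_left hX3 (sub_nonneg.mpr (hb u))
            rw [fU, fI, fA, fB]
            linarith [h1, h2]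
          · -- u ∉ A, u ∈ B
            have huU : u ∈ U := by rw [hU]; exact Finset.mem_union_right A huB
            have huI : u ∉ I := fun h => huA (Finset.mem_inter.mp (hI h)).1
            have fU : G.fit U u = G.m u := by unfold fit; rw [if_pos huU]
            have fA : G.fit A u = G.r u := by unfold fit; rw [if_neg huA]
            have fB : G.fit B u = G.m u := by unfold fit; rw [if_pos huB]
            have fI : G.fit I u = G.r u := by unfold fit; rw [if_neg huI]
            have k4 : G.hop G.fp U u + G.fp I
                ≤ G.wI t A + G.hop (G.wI t) B u := by
              have hperv : ∀ v, G.fp (moranNext U u v) + G.fp I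
                  ≤ G.wI t A + G.wI t (moranNext B u v) := by
                intro v
                refine ih _ _ _ _ ?_
                  (Finset.subset_inter hIA (hIB.trans (moranNext_self_subset huB v)))
                have h1 : moranNext U u v = insert v U := by
                  unfold moranNext; rw [if_pos huU]
                have h2 : moranNext B u v = insert v B := by
                  unfold moranNext; rw [if_pos huB]
                rw [h1, h2, hU]
                ext x
                simp only [Finset.mem_union, Finset.mem_insert]
                tauto
              have h := Finset.sum_le_sum fun v (_ : v ∈ Finset.univ) =>
                mul_le_mul_of_nonneg_left (hperv v) (G.w_nonneg u v)
              simpa only [hop, mul_add, Finset.sum_add_distrib, hconst] using h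
            have hX : (G.hop G.fp U u - G.fp U) + (G.hop G.fp I u - G.fp I)
                - (G.hop (G.wI t) A u - G.wI t A)
                - (G.hop (G.wI t) B u - G.wI t B) ≤ s := by
              simp only [hs]; linarith [k1]
            have hX4 : (G.hop G.fp U u - G.fp U)
                - (G.hop (G.wI t) B u - G.wI t B) ≤ s := by
              simp only [hs]; linarith [k4]
            have h1 := mul_le_mul_of_nonneg_left hX (G.r_pos u).le
            have h2 := mul_le_mul_of_nonneg_left hX4 (sub_nonneg.mpr (hb u))
            rw [fU, fI, fA, fB]
            linarith [h1, h2]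
          · -- u ∉ A, u ∉ B
            have huU : u ∉ U := by
              rw [hU]
              simp only [Finset.mem_union]
              tauto
            have huI : u ∉ I := fun h => huA (Finset.mem_inter.mp (hI h)).1
            have fU : G.fit U u = G.r u := by unfold fit; rw [if_neg huU]
            have fA : G.fit A u = G.r u := by unfold fit; rw [if_neg huA]
            have fB : G.fit B u = G.r u := by unfold fit; rw [if_neg huB]
            have fI : G.fit I u = G.r u := by unfold fit; rw [if_neg huI]
            have hX : (G.hop G.fp U u - G.fp U) + (G.hop G.fp I u - G.fp I)
                - (G.hop (G.wI t) A u - G.wI t A)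
                - (G.hop (G.wI t) B u - G.wI t B) ≤ s := by
              simp only [hs]; linarith [k1]
            have h1 := mul_le_mul_of_nonneg_left hX (G.r_pos u).le
            rw [fU, fI, fA, fB]
            linarith [h1]
        -- assemble
        have hsum : (∑ u, G.fit U u * G.hop G.fp U u) - (∑ u, G.fit U u) * G.fp U
            + ((∑ u, G.fit I u * G.hop G.fp I u) - (∑ u, G.fit I u) * G.fp I)
            - ((∑ u, G.fit A u * G.hop (G.wI t) A u) - (∑ u, G.fit A u) * G.wI t A)
            - ((∑ u, G.fit B u * G.hop (G.wI t) B u) - (∑ u, G.fit B u) * G.wI t B)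
            ≤ G.Cmax * (G.wI t A + G.wI t B - G.fp U - G.fp I) := by
          have h := Finset.sum_le_sum fun u (_ : u ∈ Finset.univ) => keyu u
          have hL : (∑ u, (G.fit U u * (G.hop G.fp U u - G.fp U)
              + G.fit I u * (G.hop G.fp I u - G.fp I)
              - G.fit A u * (G.hop (G.wI t) A u - G.wI t A)
              - G.fit B u * (G.hop (G.wI t) B u - G.wI t B)))
              = (∑ u, G.fit U u * G.hop G.fp U u) - (∑ u, G.fit U u) * G.fp U
              + ((∑ u, G.fit I u * G.hop G.fp I u) - (∑ u, G.fit I u) * G.fp I)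
              - ((∑ u, G.fit A u * G.hop (G.wI t) A u) - (∑ u, G.fit A u) * G.wI t A)
              - ((∑ u, G.fit B u * G.hop (G.wI t) B u) - (∑ u, G.fit B u) * G.wI t B) := by
            simp only [mul_sub, Finset.sum_add_distrib, Finset.sum_sub_distrib,
              ← Finset.sum_mul]
          have hR : (∑ u, G.fit U u * s) = (∑ u, G.fit U u) * s := by
            rw [← Finset.sum_mul]
          rw [hL, hR] at h
          have hUC : (∑ u, G.fit U u) ≤ G.Cmax := G.totalFit_le_Cmax hb U
          have h2 : (∑ u, G.fit U u) * s ≤ G.Cmax * s :=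
            mul_le_mul_of_nonneg_right hUC hs0
          calc _ ≤ (∑ u, G.fit U u) * s := h
          _ ≤ G.Cmax * s := h2
          _ = G.Cmax * (G.wI t A + G.wI t B - G.fp U - G.fp I) := by rw [hs]
        have harmU : G.totalFit U * G.fp U = ∑ u, G.fit U u * G.hop G.fp U u := G.fp_harm U
        have harmI : G.totalFit I * G.fp I = ∑ u, G.fit I u * G.hop G.fp I u := G.fp_harm I
        have cU : G.totalFit U = ∑ u, G.fit U u := rfl
        have cI : G.totalFit I = ∑ u, G.fit I u := rfl
        have cA : G.totalFit A = ∑ u, G.fit A u := rfl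
        have cB : G.totalFit B = ∑ u, G.fit B u := rfl
        rw [G.wI_succ t hA, G.wI_succ t hB, ← add_div, le_div_iff₀ hC]
        rw [cU] at harmU
        rw [cI] at harmI
        rw [cA, cB]
        linarith [hsum, harmU, harmI]
      intro U I A B hU hI
      by_cases hA : A = ∅
      · subst hA
        have hUB : U = B := by rw [hU]; exact Finset.empty_union B
        have hI0 : I = ∅ := by
          have h1 : I ⊆ ∅ := by simpa using hI
          exact Finset.subset_empty.mp h1
        rw [hUB, hI0, G.fp_empty, G.wI_succ_empty]
        by_cases hB : B = ∅
        · rw [hB, G.fp_empty, G.wI_succ_empty]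
        · have h := main B B B B hB hB (by simp) (by simp)
          linarith
      · by_cases hB : B = ∅
        · subst hB
          have hUA : U = A := by rw [hU]; exact Finset.union_empty A
          have hI0 : I = ∅ := by
            have h1 : I ⊆ ∅ := by simpa using hI
            exact Finset.subset_empty.mp h1
          rw [hUA, hI0, G.fp_empty, G.wI_succ_empty]
          have h := main A A A A hA hA (by simp) (by simp)
          linarith
        · exact main U I A B hA hB hU hI


/-- Submodularity-type inequality for the fixation probability. -/
lemma fp_master [Nonempty V] (hb : G.MutantBiased) {U I A B : Finset V}
    (hU : U = A ∪ B) (hI : I ⊆ A ∩ B) :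
    G.fp U + G.fp I ≤ G.fp A + G.fp B := by
  have h : ∀ t, G.fp U + G.fp I ≤ G.wI t A + G.wI t B := fun t =>
    G.master_wI hb t U I A B hU hI
  have hAB : Filter.Tendsto (fun t => G.wI t A + G.wI t B) Filter.atTop
      (nhds (G.wInf A + G.wInf B)) := (G.tendsto_wI hb A).add (G.tendsto_wI hb B)
  have h2 := ge_of_tendsto hAB (Filter.Eventually.of_forall h)
  rw [G.wInf_eq_fp hb A, G.wInf_eq_fp hb B] at h2
  exact h2

/-- Monotonicity of the fixation probability in the seed set. -/
lemma fp_mono [Nonempty V] (hb : G.MutantBiased) {X Y : Finset V} (h : X ⊆ Y) :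
    G.fp X ≤ G.fp Y := by
  have := G.fp_master hb (U := Y) (I := X) (A := Y) (B := Y)
    (by rw [Finset.union_self]) (Finset.subset_inter h h)
  linarith

/-- Diminishing returns for adding a single vertex. -/
lemma fp_marginal [Nonempty V] (hb : G.MutantBiased) {T X : Finset V} (hTX : T ⊆ X)
    (v : V) : G.fp (insert v X) + G.fp T ≤ G.fp X + G.fp (insert v T) := by
  refine G.fp_master hb (U := insert v X) (I := T) (A := X) (B := insert v T) ?_ ?_
  · ext x
    simp only [Finset.mem_insert, Finset.mem_union]
    constructor
    · rintro (rfl | hx)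
      · exact Or.inr (Or.inl rfl)
      · exact Or.inl hx
    · rintro (hx | (rfl | hx))
      · exact Or.inr hx
      · exact Or.inl rfl
      · exact Or.inr (hTX hx)
  · exact Finset.subset_inter hTX (Finset.subset_insert v T)

/-- Telescoping of the marginal gains. -/
lemma fp_telescope [Nonempty V] (hb : G.MutantBiased) (X T : Finset V) :
    G.fp (X ∪ T) ≤ G.fp X + ∑ u ∈ T, (G.fp (insert u X) - G.fp X) := by
  induction T using Finset.induction_on with
  | empty => simp
  | @insert a T' ha ih =>
      have h1 : X ∪ insert a T' = insert a (X ∪ T') := Finset.union_insert a X T'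
      have h2 := G.fp_marginal hb (Finset.subset_union_left (s₁ := X) (s₂ := T')) a
      rw [h1, Finset.sum_insert ha]
      linarith

end FitnessGraph

/-- Greedy seed selection on a mutant-biased fitness graph: the greedy algorithm,
which starts from `S 0 = ∅` and at each of `k` steps adds a node maximizing the
fixation probability, returns a seed set `S k` whose fixation probability is at
least `(1 - 1/e)` times the maximum fixation probability over all seed sets of
size at most `k`. -/
theorem greedy_approximation (G : FitnessGraph V) (hbias : G.MutantBiased)
    (k : ℕ) (hk : 1 ≤ k) (S : ℕ → Finset V) (hS0 : S 0 = ∅)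
    (hgreedy : ∀ i < k, ∃ u : V,
      (∀ v : V, G.fp (insert v (S i)) ≤ G.fp (insert u (S i))) ∧
      S (i + 1) = insert u (S i)) :
    (1 - 1 / Real.exp 1) *
        ((Finset.univ.powerset.filter fun T : Finset V => T.card ≤ k).sup'
          ⟨∅, by simp⟩ fun T => G.fp T) ≤
      G.fp (S k) := by
  cases isEmpty_or_nonempty V with
  | inl hempty =>
      obtain ⟨u, -⟩ := hgreedy 0 hk
      exact (hempty.false u).elim
  | inr hne =>
      obtain ⟨T₀, hT₀mem, hOPT⟩ := Finset.exists_mem_eq_sup'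
        (⟨∅, by simp⟩ : ((Finset.univ.powerset.filter
          fun T : Finset V => T.card ≤ k)).Nonempty) (fun T => G.fp T)
      rw [hOPT]
      have hT₀card : T₀.card ≤ k := (Finset.mem_filter.mp hT₀mem).2
      have hk1 : (1:ℝ) ≤ (k:ℝ) := by exact_mod_cast hk
      have hkpos : (0:ℝ) < (k:ℝ) := by linarith
      have hfac : (0:ℝ) ≤ 1 - 1/(k:ℝ) := by
        have : 1/(k:ℝ) ≤ 1 := by rw [div_le_one hkpos]; exact hk1
        linarith
      -- the per-step greedy inequality
      have hstep : ∀ i, i < k →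
          G.fp T₀ - G.fp (S (i+1)) ≤ (1 - 1/(k:ℝ)) * (G.fp T₀ - G.fp (S i)) := by
        intro i hi
        obtain ⟨u₀, hu₀max, hSsucc⟩ := hgreedy i hi
        have h1 : G.fp T₀ ≤ G.fp (S i ∪ T₀) :=
          G.fp_mono hbias Finset.subset_union_right
        have h2 := G.fp_telescope hbias (S i) T₀
        have h3 : ∀ u ∈ T₀, G.fp (insert u (S i)) - G.fp (S i)
            ≤ G.fp (S (i+1)) - G.fp (S i) := by
          intro u _
          have := hu₀max u
          rw [hSsucc]
          linarith
        have h4 : (∑ u ∈ T₀, (G.fp (insert u (S i)) - G.fp (S i)))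
            ≤ T₀.card * (G.fp (S (i+1)) - G.fp (S i)) := by
          calc (∑ u ∈ T₀, (G.fp (insert u (S i)) - G.fp (S i)))
              ≤ ∑ _u ∈ T₀, (G.fp (S (i+1)) - G.fp (S i)) := Finset.sum_le_sum h3
          _ = T₀.card * (G.fp (S (i+1)) - G.fp (S i)) := by
              rw [Finset.sum_const, nsmul_eq_mul]
        have h5 : G.fp (S i) ≤ G.fp (S (i+1)) := by
          rw [hSsucc]
          exact G.fp_mono hbias (Finset.subset_insert u₀ (S i))
        have h6 : (T₀.card : ℝ) ≤ (k : ℝ) := by exact_mod_cast hT₀card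
        have h7 : (T₀.card : ℝ) * (G.fp (S (i+1)) - G.fp (S i))
            ≤ (k : ℝ) * (G.fp (S (i+1)) - G.fp (S i)) :=
          mul_le_mul_of_nonneg_right h6 (by linarith)
        have h8 : G.fp T₀ - G.fp (S i) ≤ (k:ℝ) * (G.fp (S (i+1)) - G.fp (S i)) := by
          linarith
        have h9 : (G.fp T₀ - G.fp (S i)) / (k:ℝ) ≤ G.fp (S (i+1)) - G.fp (S i) := by
          rw [div_le_iff₀ hkpos]
          linarith
        have e : (1 - 1/(k:ℝ)) * (G.fp T₀ - G.fp (S i))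
            = (G.fp T₀ - G.fp (S i)) - (G.fp T₀ - G.fp (S i)) / (k:ℝ) := by
          field_simp
        rw [e]
        linarith
      have hiter : ∀ j, j ≤ k →
          G.fp T₀ - G.fp (S j) ≤ (1 - 1/(k:ℝ))^j * (G.fp T₀ - G.fp (S 0)) := by
        intro j
        induction j with
        | zero => intro _; simp
        | succ j ihj =>
            intro hjk
            have hjlt : j < k := Nat.lt_of_succ_le hjk
            have h1 := ihj (Nat.le_of_lt hjlt)
            have h2 := hstep j hjlt
            calc G.fp T₀ - G.fp (S (j+1))
                ≤ (1 - 1/(k:ℝ)) * (G.fp T₀ - G.fp (S j)) := h2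
            _ ≤ (1 - 1/(k:ℝ)) * ((1 - 1/(k:ℝ))^j * (G.fp T₀ - G.fp (S 0))) :=
                mul_le_mul_of_nonneg_left h1 hfac
            _ = (1 - 1/(k:ℝ))^(j+1) * (G.fp T₀ - G.fp (S 0)) := by ring
      have ha0 : G.fp (S 0) = 0 := by rw [hS0]; exact G.fp_empty
      have hOPT0 : 0 ≤ G.fp T₀ := G.fp_nonneg T₀
      have hpow : (1 - 1/(k:ℝ))^k ≤ 1/Real.exp 1 := by
        have h1 : 1 - 1/(k:ℝ) ≤ Real.exp (-(1/(k:ℝ))) := by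
          have := Real.add_one_le_exp (-(1/(k:ℝ)))
          linarith
        have hkne : (k:ℝ) ≠ 0 := hkpos.ne'
        calc (1 - 1/(k:ℝ))^k ≤ (Real.exp (-(1/(k:ℝ))))^k := pow_le_pow_left₀ hfac h1 k
        _ = Real.exp ((k:ℝ) * (-(1/(k:ℝ)))) := by rw [← Real.exp_nat_mul]
        _ = Real.exp (-1) := by
            congr 1
            field_simp
        _ = 1/Real.exp 1 := by rw [Real.exp_neg, one_div]
      have hfinal := hiter k le_rfl
      rw [ha0, sub_zero] at hfinal
      have hfinal2 : (1 - 1/(k:ℝ))^k * G.fp T₀ ≤ (1/Real.exp 1) * G.fp T₀ :=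
        mul_le_mul_of_nonneg_right hpow hOPT0
      linarith
end

section
/- For every integer n ≥ 2, set x = n^{2n+7} and α = (x/(x+n²))^n. Then 1 − (1 − 1/n²)·α > 0 and ( (α/n²) / (1 − (1 − 1/n²)·α) )^n ≥ 1 − 1/n^{2n}. -/
set_option maxHeartbeats 1000000


/-- Quantitative core of the choice of the large mutant fitness `x = n^{2n+7}` in the
mutant-biased inapproximability reduction with `y = 1`. -/
theorem large_x_bound (n : ℕ) (hn : 2 ≤ n) (x α : ℝ)
    (hx : x = (n : ℝ) ^ (2 * n + 7))
    (hα : α = (x / (x + (n : ℝ) ^ 2)) ^ n) :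
    0 < 1 - (1 - 1 / (n : ℝ) ^ 2) * α ∧
      ((α / (n : ℝ) ^ 2) / (1 - (1 - 1 / (n : ℝ) ^ 2) * α)) ^ n ≥ 1 - 1 / (n : ℝ) ^ (2 * n) := by
  set nr : ℝ := (n : ℝ) with hnr
  have hn2 : (2 : ℝ) ≤ nr := by simpa [hnr] using (Nat.cast_le.mpr hn : ((2:ℕ):ℝ) ≤ (n:ℝ))
  have hn0 : (0 : ℝ) < nr := by linarith
  have hn1 : (1 : ℝ) ≤ nr := by linarith
  have hx0 : 0 < x := by rw [hx]; positivity
  have hs : 0 < x + nr ^ 2 := by positivity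
  -- the base of α
  have hbase0 : 0 < x / (x + nr ^ 2) := by positivity
  have hbase1 : x / (x + nr ^ 2) ≤ 1 := by
    rw [div_le_one hs]; nlinarith
  have hα0 : 0 < α := by rw [hα]; positivity
  have hα1 : α ≤ 1 := by
    rw [hα]; exact pow_le_one₀ (le_of_lt hbase0) hbase1
  -- t = n²/(x+n²)
  set t : ℝ := nr ^ 2 / (x + nr ^ 2) with hts
  have htb : x / (x + nr ^ 2) = 1 - t := by
    rw [hts]; field_simp; ring
  have ht0 : 0 < t := by rw [hts]; positivity
  have ht1 : t ≤ 1 := by rw [hts, div_le_one hs]; nlinarith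
  -- Bernoulli: α ≥ 1 - n t
  have hbern : 1 - nr * t ≤ α := by
    rw [hα, htb]
    have := one_add_mul_le_pow (a := -t) (by linarith) n
    simpa [sub_eq_add_neg, mul_comm] using this
  -- n t ≤ 1/n^{2n+4}
  have hxsplit : x = nr ^ (2 * n + 4) * nr ^ 3 := by
    rw [hx, ← pow_add]
  have hpow0 : (0 : ℝ) < nr ^ (2 * n + 4) := by positivity
  have hnt : nr * t ≤ 1 / nr ^ (2 * n + 4) := by
    rw [hts, ← mul_div_assoc, div_le_div_iff₀ hs hpow0]
    have : nr * nr ^ 2 * nr ^ (2 * n + 4) = x := by rw [hxsplit]; ring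
    nlinarith [sq_nonneg nr, hpow0, hn0]
  set e : ℝ := 1 / nr ^ (2 * n + 4) with he
  have hαe : 1 - e ≤ α := le_trans (by linarith) hbern
  -- e ≤ 1/2
  have hpw : nr ≤ nr ^ (2 * n + 4) := le_self_pow₀ hn1 (by omega)
  have he2 : e ≤ 1 / 2 := by
    rw [he]
    apply div_le_div_of_nonneg_left (by norm_num) (by norm_num)
    linarith
  have hαhalf : (1:ℝ)/2 ≤ α := by linarith
  -- denominator
  set D : ℝ := 1 - (1 - 1 / nr ^ 2) * α with hD
  have hDeq : D = (1 - α) + α / nr ^ 2 := by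
    rw [hD]; field_simp; ring
  have hnr2 : (0:ℝ) < nr ^ 2 := by positivity
  have hDge : α / nr ^ 2 ≤ D := by
    rw [hDeq]
    have : 0 ≤ 1 - α := by linarith
    linarith
  have hDpos : 0 < D := lt_of_lt_of_le (by positivity) hDge
  refine ⟨hDpos, ?_⟩
  -- ε
  set ε : ℝ := 2 / nr ^ (2 * n + 2) with hε
  have hpw2 : nr ≤ nr ^ (2 * n + 2) := le_self_pow₀ hn1 (by omega)
  have hpw2pos : (0:ℝ) < nr ^ (2 * n + 2) := by positivity
  have hε0 : 0 < ε := by rw [hε]; positivity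
  have hε1 : ε ≤ 1 := by
    rw [hε, div_le_one hpw2pos]; linarith
  -- key: ε * D ≥ e
  have hkey : e ≤ ε * D := by
    have h1 : ε * ((1/2) / nr ^ 2) = e := by
      rw [hε, he]
      have : nr ^ (2 * n + 4) = nr ^ (2 * n + 2) * nr ^ 2 := by rw [← pow_add]
      rw [this]; field_simp
    calc e = ε * ((1/2) / nr ^ 2) := h1.symm
      _ ≤ ε * (α / nr ^ 2) := by
          apply mul_le_mul_of_nonneg_left _ (le_of_lt hε0)
          exact div_le_div_of_nonneg_right hαhalf hnr2.le
      _ ≤ ε * D := mul_le_mul_of_nonneg_left hDge (le_of_lt hε0)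
  -- R ≥ 1 - ε
  have hR : 1 - ε ≤ (α / nr ^ 2) / D := by
    rw [le_div_iff₀ hDpos]
    have hαD : α / nr ^ 2 = D - (1 - α) := by rw [hDeq]; ring
    rw [hαD]
    have h1α : 1 - α ≤ e := by linarith
    nlinarith
  have hRnn : (0:ℝ) ≤ 1 - ε := by linarith
  have hRn : (1 - ε) ^ n ≤ ((α / nr ^ 2) / D) ^ n :=
    pow_le_pow_left₀ hRnn hR n
  have hbern2 : 1 - nr * ε ≤ (1 - ε) ^ n := by
    have := one_add_mul_le_pow (a := -ε) (by linarith) n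
    have h : 1 - (n:ℝ) * ε ≤ (1 - ε) ^ n := by
      simpa [sub_eq_add_neg, mul_comm] using this
    simpa [hnr] using h
  -- n ε ≤ 1/n^{2n}
  have hfin : nr * ε ≤ 1 / nr ^ (2 * n) := by
    rw [hε]
    have hsplit : nr ^ (2 * n + 2) = nr ^ (2 * n) * nr ^ 2 := by rw [← pow_add]
    have hp2n : (0:ℝ) < nr ^ (2 * n) := by positivity
    rw [← mul_div_assoc, div_le_div_iff₀ hpw2pos hp2n, hsplit]
    calc nr * 2 * nr ^ (2 * n) ≤ nr * nr * nr ^ (2 * n) :=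
          mul_le_mul_of_nonneg_right (mul_le_mul_of_nonneg_left hn2 hn0.le) hp2n.le
      _ = 1 * (nr ^ (2 * n) * nr ^ 2) := by ring
  calc (1:ℝ) - 1 / nr ^ (2 * n) ≤ 1 - nr * ε := by linarith
    _ ≤ (1 - ε) ^ n := hbern2
    _ ≤ ((α / nr ^ 2) / D) ^ n := hRn
end
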